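/- arXiv:2207.03165 — 6 statements merged into one kernel-verified Lean document; each statement's English description precedes it below -/
import Mathlib

section
/- Let l ≥ 9 be a natural number with 3 dividing l, let k ≥ 6 be an even number, and set n = (2/3)kl + 1. Let σ ∈ A_n be such that m_σ = n and 3·n_σ > n + 2. Then there exist ε ∈ {0,1} and even permutations φ, τ ∈ S_n with disjoint supports such that σ = φτ, |supp(φ)| = (2/3)(k−2)l + ε, and |supp(τ)| = (4l/3) + 1 − ε. -/
open Equiv

/-- `σ ∈ S_n` is a product of `k` many `l`-cycles. -/
def IsProdOfCycles (n k l : ℕ) (σ : Equiv.Perm (Fin n)) : Prop :=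
  ∃ c : Fin k → Equiv.Perm (Fin n),
    (∀ i, (c i).IsCycle ∧ (c i).support.card = l) ∧ σ = (List.ofFn c).prod

lemma arith_pick (m c2 c3 : ℕ) (hc2 : 3 ≤ c2) (h : 4*m+4 ≤ 2*c2+c3) :
    ∃ ε a d : ℕ, ε ≤ 1 ∧ a % 2 = 0 ∧ a ≤ c2 ∧ d ≤ c3 ∧ 2*a+3*d = 4*m+1-ε := by
  by_cases hA : 2*m ≤ c2
  · exact ⟨1, 2*m, 0, by omega, by omega, by omega, by omega, by omega⟩
  · push_neg at hA
    obtain ⟨a0, ha0⟩ : ∃ a0, a0 % 2 = 0 ∧ c2 - 1 ≤ a0 ∧ a0 ≤ c2 := by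
      rcases Nat.even_or_odd c2 with hc | hc
      · exact ⟨c2, by rcases hc with ⟨t, ht⟩; omega, by omega, by omega⟩
      · exact ⟨c2 - 1, by rcases hc with ⟨t, ht⟩; omega, by omega, by omega⟩
    have hlt : a0 + 1 ≤ 2*m := by omega
    have h3 : (4*m + a0) % 3 = 0 ∨ (4*m + a0) % 3 = 1 ∨ (4*m + a0) % 3 = 2 := by omega
    rcases h3 with h3 | h3 | h3
    · obtain ⟨d, hd⟩ : ∃ d, 3*d = 4*m - 2*a0 := ⟨(4*m-2*a0)/3, by omega⟩
      refine ⟨1, a0, d, ?_, ?_, ?_, ?_, ?_⟩ <;> omega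
    · obtain ⟨d, hd⟩ : ∃ d, 3*d = 4*m+5-2*a0 := ⟨(4*m+5-2*a0)/3, by omega⟩
      refine ⟨0, a0 - 2, d, ?_, ?_, ?_, ?_, ?_⟩ <;> omega
    · obtain ⟨d, hd⟩ : ∃ d, 3*d = 4*m+1-2*a0 := ⟨(4*m+1-2*a0)/3, by omega⟩
      refine ⟨0, a0, d, ?_, ?_, ?_, ?_, ?_⟩ <;> omega

theorem main_decomposability (k l n : ℕ) (hl : 9 ≤ l) (hl3 : 3 ∣ l)
    (hk : 6 ≤ k) (hke : Even k) (hn : n = 2 * k * l / 3 + 1)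
    (σ : Equiv.Perm (Fin n)) (hσ : σ ∈ alternatingGroup (Fin n))
    (hm : σ.support.card = n) (hns : n + 2 < 3 * σ.cycleFactorsFinset.card) :
    ∃ (ε : ℕ) (φ τ : Equiv.Perm (Fin n)), ε ≤ 1 ∧
      φ ∈ alternatingGroup (Fin n) ∧ τ ∈ alternatingGroup (Fin n) ∧
      φ.Disjoint τ ∧ σ = φ * τ ∧
      φ.support.card = 2 * (k - 2) * l / 3 + ε ∧
      τ.support.card = 4 * l / 3 + 1 - ε := by
  classical
  obtain ⟨m, rfl⟩ : ∃ m, l = 3 * m := ⟨l / 3, by omega⟩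
  have hm3 : 3 ≤ m := by omega
  obtain ⟨k', rfl⟩ : ∃ k', k = k' + 2 := ⟨k - 2, by omega⟩
  have hk' : 4 ≤ k' := by omega
  -- clean up the divisions
  have e1 : 2 * (k' + 2) * (3 * m) / 3 = 2 * (k' * m) + 4 * m := by
    rw [show 2*(k'+2)*(3*m) = 3*(2*(k'*m)+4*m) by ring]
    exact Nat.mul_div_cancel_left _ (by norm_num)
  have e2 : 2 * (k' + 2 - 2) * (3 * m) / 3 = 2 * (k' * m) := by
    rw [show k'+2-2 = k' by omega, show 2*k'*(3*m) = 3*(2*(k'*m)) by ring]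
    exact Nat.mul_div_cancel_left _ (by norm_num)
  have e3 : 4 * (3 * m) / 3 = 4 * m := by omega
  obtain ⟨q, hq⟩ : ∃ q, k' * m = q := ⟨_, rfl⟩
  rw [e1, hq] at hn
  rw [e2, e3, hq]
  have hqm : 4 * m ≤ q := hq ▸ Nat.mul_le_mul_right m hk'
  clear e1 e2 e3 hq hl3 hke hk hl hk'
  -- set up the cycle factors
  set F := σ.cycleFactorsFinset with hF
  have hpairwise : (F : Set (Perm (Fin n))).Pairwise Perm.Disjoint :=
    σ.cycleFactorsFinset_pairwise_disjoint
  have hcycle : ∀ f ∈ F, f.IsCycle := fun f hf =>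
    (Equiv.Perm.mem_cycleFactorsFinset_iff.mp hf).1
  have hsum : ∑ f ∈ F, f.support.card = n := by
    have h := Equiv.Perm.sum_cycleType σ
    rw [Equiv.Perm.cycleType_def] at h
    rw [show ∑ f ∈ F, f.support.card = (Multiset.map (Finset.card ∘ Equiv.Perm.support) σ.cycleFactorsFinset.val).sum from rfl, h, hm]
  set F2 := F.filter (fun f => f.support.card = 2) with hF2
  set F3 := F.filter (fun f => f.support.card = 3) with hF3
  -- the key counting inequality
  have hkey : 4 * F.card ≤ n + (2 * F2.card + F3.card) := by
    have h1 : ∀ f ∈ F, 4 ≤ f.support.card +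
        ((if f.support.card = 2 then 2 else 0) + (if f.support.card = 3 then 1 else 0)) := by
      intro f hf
      have h2 := (hcycle f hf).two_le_card_support
      split_ifs <;> omega
    calc 4 * F.card = ∑ _f ∈ F, 4 := by rw [Finset.sum_const, smul_eq_mul, mul_comm]
      _ ≤ ∑ f ∈ F, (f.support.card +
          ((if f.support.card = 2 then 2 else 0) + (if f.support.card = 3 then 1 else 0))) :=
        Finset.sum_le_sum h1
      _ = n + (2 * F2.card + F3.card) := by
          rw [Finset.sum_add_distrib, hsum, Finset.sum_add_distrib]
          congr 1
          congr 1
          · rw [← Finset.sum_filter, ← hF2, Finset.sum_const, smul_eq_mul, mul_comm]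
          · rw [← Finset.sum_filter, ← hF3, Finset.sum_const, smul_eq_mul, mul_one]
  have hdisj23 : Disjoint F2 F3 := by
    rw [Finset.disjoint_left]
    intro f h2 h3
    have := (Finset.mem_filter.mp h2).2
    have := (Finset.mem_filter.mp h3).2
    omega
  have hle : F2.card + F3.card ≤ F.card := by
    rw [← Finset.card_union_of_disjoint hdisj23]
    exact Finset.card_le_card (Finset.union_subset (Finset.filter_subset _ _)
      (Finset.filter_subset _ _))
  -- apply the arithmetic lemma
  obtain ⟨ε, a, d, hε, haeven, hac2, hdc3, habd⟩ :=
    arith_pick m F2.card F3.card (by omega) (by omega)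
  refine ⟨ε, ?_⟩
  -- choose the subsets
  obtain ⟨S2, hS2sub, hS2card⟩ := Finset.exists_subset_card_eq hac2
  obtain ⟨S3, hS3sub, hS3card⟩ := Finset.exists_subset_card_eq hdc3
  set S := S2 ∪ S3 with hSdef
  have hSsub : S ⊆ F :=
    Finset.union_subset (hS2sub.trans (Finset.filter_subset _ _))
      (hS3sub.trans (Finset.filter_subset _ _))
  have hS23 : Disjoint S2 S3 := hdisj23.mono hS2sub hS3sub
  have hpwS : (S : Set (Perm (Fin n))).Pairwise Perm.Disjoint :=
    hpairwise.mono (by exact_mod_cast hSsub)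
  set τ := S.noncommProd id (hpwS.mono' fun _ _ => Perm.Disjoint.commute) with hτdef
  have hpwC : ((F \ S : Finset _) : Set (Perm (Fin n))).Pairwise Perm.Disjoint :=
    hpairwise.mono (by exact_mod_cast (Finset.sdiff_subset))
  set φ := (F \ S).noncommProd id (hpwC.mono' fun _ _ => Perm.Disjoint.commute) with hφdef
  -- σ = φ * τ
  have hcomm : { x | x ∈ (F \ S) ∪ S }.Pairwise (Function.onFun Commute id) := by
    rw [Finset.sdiff_union_of_subset hSsub]
    exact hpairwise.mono' fun _ _ h => h.commute
  have hprod : σ = φ * τ := by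
    have h1 := Equiv.Perm.cycleFactorsFinset_noncommProd σ
    have h2 := Finset.noncommProd_union_of_disjoint (Finset.sdiff_disjoint : Disjoint (F \ S) S) id hcomm
    have h3 : ((F \ S) ∪ S).noncommProd id hcomm = F.noncommProd id (σ.cycleFactorsFinset_mem_commute) :=
      Finset.noncommProd_congr (Finset.sdiff_union_of_subset hSsub) (fun _ _ => rfl) _
    rw [← h1, ← h3, h2]
  -- disjointness
  have hdisjφτ : φ.Disjoint τ := by
    apply Equiv.Perm.Disjoint.symm
    apply Equiv.Perm.disjoint_noncommProd_right
    intro g hg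
    apply Equiv.Perm.Disjoint.symm
    apply Equiv.Perm.disjoint_noncommProd_right
    intro f hf
    exact hpairwise (Finset.sdiff_subset hg) (hSsub hf)
      (fun hgf => (Finset.mem_sdiff.mp hg).2 (hgf ▸ hf))
  -- support cards
  have hsuppτ : τ.support.card = ∑ f ∈ S, f.support.card := by
    have hsupp : τ.support = S.biUnion Equiv.Perm.support :=
      Equiv.Perm.support_noncommProd (k := id) (s := S) hpwS
    rw [hsupp]
    exact Finset.card_biUnion fun x hx y hy hxy => (hpwS hx hy hxy).disjoint_support
  have hS2c : ∀ f ∈ S2, f.support.card = 2 := fun f hf => (Finset.mem_filter.mp (hS2sub hf)).2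
  have hS3c : ∀ f ∈ S3, f.support.card = 3 := fun f hf => (Finset.mem_filter.mp (hS3sub hf)).2
  have hτcard : τ.support.card = 4 * m + 1 - ε := by
    rw [hsuppτ, ← habd, Finset.sum_union hS23,
      Finset.sum_congr rfl hS2c, Finset.sum_congr rfl hS3c,
      Finset.sum_const, Finset.sum_const, hS2card, hS3card]
    simp [mul_comm]
  -- signs
  have hsτ : Equiv.Perm.sign τ = 1 := by
    rw [hτdef, Finset.map_noncommProd, Finset.noncommProd_eq_prod]
    have : ∏ f ∈ S, Equiv.Perm.sign (id f) = ∏ f ∈ S, Equiv.Perm.sign f := rfl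
    rw [this, Finset.prod_union hS23,
      Finset.prod_congr rfl (fun f hf => ((hcycle f (hSsub (Finset.mem_union_left _ hf))).sign.trans (by rw [hS2c f hf]; decide) : Equiv.Perm.sign f = -1)),
      Finset.prod_congr rfl (fun f hf => ((hcycle f (hSsub (Finset.mem_union_right _ hf))).sign.trans (by rw [hS3c f hf]; decide) : Equiv.Perm.sign f = 1)),
      Finset.prod_const, Finset.prod_const, hS2card, hS3card, one_pow, mul_one]
    exact Even.neg_one_pow (Nat.even_iff.mpr haeven)
  have hsσ : Equiv.Perm.sign σ = 1 := Equiv.Perm.mem_alternatingGroup.mp hσ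
  have hsφ : Equiv.Perm.sign φ = 1 := by
    have := hsσ
    rw [hprod, map_mul, hsτ, mul_one] at this
    exact this
  -- φ's support card
  have hφcard : φ.support.card = 2 * q + ε := by
    have hc := hdisjφτ.card_support_mul
    rw [← hprod, hm, hτcard] at hc
    omega
  exact ⟨φ, τ, hε, Equiv.Perm.mem_alternatingGroup.mpr hsφ,
    Equiv.Perm.mem_alternatingGroup.mpr hsτ, hdisjφτ, hprod, hφcard, hτcard⟩
end

section
/- Let σ ∈ S_n and let l₁, l₂ be natural numbers with n ≥ l₁ ≥ l₂ ≥ 2. Then σ = C₁C₂ for some cycles C₁, C₂ in S_n of lengths l₁ and l₂ respectively if and only if either (i) n_σ = 2, the two cycles in the disjoint cycle decomposition of σ have lengths l₁ and l₂, and l₁ + l₂ = m_σ, or (ii) both of the following hold: l₁ + l₂ = m_σ + n_σ + 2s for some nonnegative integer s, and l₁ − l₂ ≤ m_σ − n_σ. -/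
open Equiv

section ProductOfTwoCyclesHelpers

open Equiv.Perm List



variable {α : Type*} [DecidableEq α]

theorem formPerm_map (π : Equiv.Perm α) : ∀ (l : List α),
    List.formPerm (l.map π) = π * List.formPerm l * π⁻¹
  | [] => by simp
  | [x] => by simp
  | (x :: y :: l) => by
    have ih := formPerm_map π (y :: l)
    simp only [List.map_cons] at ih ⊢
    rw [List.formPerm_cons_cons, List.formPerm_cons_cons, ih]
    have hsw : Equiv.swap (π x) (π y) = π * Equiv.swap x y * π⁻¹ := by
      rw [Equiv.swap_apply_apply]
    rw [hsw]; group

theorem formPerm_split (t : α) : ∀ (L₁ L₂ : List α),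
    Nodup (t :: (L₁ ++ L₂)) →
    List.formPerm (t :: (L₁ ++ L₂)) =
      List.formPerm (t :: L₂) * List.formPerm (t :: L₁)
  | [], L₂, _ => by simp
  | (a :: L₁), L₂, h => by
    have hnd : Nodup (a :: (L₁ ++ L₂)) := by
      simp only [List.nodup_cons, List.cons_append] at h ⊢
      exact h.2
    have ht : t ∉ (a :: (L₁ ++ L₂)) := by
      simp only [List.nodup_cons, List.cons_append] at h
      exact fun hc => h.1 hc
    have hta : t ≠ a := by intro hc; exact ht (hc ▸ List.mem_cons_self)
    have htL₂ : t ∉ L₂ := fun hc => ht (List.mem_cons_of_mem _ (List.mem_append_right _ hc))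
    have haL₂ : a ∉ L₂ := by
      have := hnd; simp only [List.nodup_cons] at this
      exact fun hc => this.1 (List.mem_append_right _ hc)
    have ih := formPerm_split a L₁ L₂ hnd
    simp only [List.cons_append] at *
    rw [List.formPerm_cons_cons, ih, List.formPerm_cons_cons t a L₁]
    have hmap : (t :: L₂).map (Equiv.swap t a) = a :: L₂ := by
      simp only [List.map_cons, Equiv.swap_apply_left]
      congr 1
      conv_rhs => rw [← List.map_id L₂]
      apply List.map_congr_left
      intro x hx
      exact Equiv.swap_apply_of_ne_of_ne (fun hc => htL₂ (hc ▸ hx)) (fun hc => haL₂ (hc ▸ hx))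
    have key : List.formPerm (a :: L₂) =
        Equiv.swap t a * List.formPerm (t :: L₂) * Equiv.swap t a := by
      rw [← hmap, formPerm_map]
      simp [Equiv.swap_inv]
    rw [key]
    simp only [mul_assoc]
    rw [← mul_assoc, Equiv.swap_mul_self, one_mul]



section Helpers
variable [Fintype α]



-- cycle decomposition as a list with given head
theorem cycle_eq_formPerm {C : Equiv.Perm α} (hC : C.IsCycle) {z : α}
    (hz : z ∈ C.support) :
    ∃ L : List α, C = List.formPerm (z :: L) ∧ List.Nodup (z :: L) ∧
      (z :: L).toFinset = C.support ∧ (z :: L).length = C.support.card := by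
  have hzz : C z ≠ z := mem_support.mp hz
  have hne : toList C z ≠ [] := by simp [toList_eq_nil_iff, hz]
  have hhead : (toList C z).head hne = z := by
    have h0 := Equiv.Perm.toList_getElem_zero (p := C) (x := z) hz
    rw [List.head_eq_getElem]; exact h0
  refine ⟨(toList C z).tail, ?_, ?_, ?_, ?_⟩
  all_goals
    have hcons : z :: (toList C z).tail = toList C z := by
      conv_rhs => rw [← List.cons_head_tail hne]
      rw [hhead]
  · rw [hcons, formPerm_toList, hC.cycleOf_eq hzz]
  · rw [hcons]; exact nodup_toList C z
  · rw [hcons]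
    ext y
    simp only [List.mem_toFinset, mem_toList_iff, hz, and_true]
    constructor
    · rintro ⟨i, rfl⟩
      exact zpow_apply_mem_support.mpr hz
    · intro hy
      exact hC.sameCycle hzz (mem_support.mp hy)
  · rw [hcons, length_toList, hC.cycleOf_eq hzz]

theorem swap_mul_cycle {D : Equiv.Perm α} (hD : D.IsCycle) {z x : α}
    (hz : z ∈ D.support) (hx : x ∉ D.support) :
    Perm.IsCycle (Equiv.swap x z * D) ∧
      (Equiv.swap x z * D).support = insert x D.support := by
  obtain ⟨L, hDL, hnd, htf, -⟩ := cycle_eq_formPerm hD hz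
  have hxL : x ∉ (z :: L) := by
    rw [← List.mem_toFinset, htf]; exact hx
  have hnd' : List.Nodup (x :: z :: L) := List.nodup_cons.mpr ⟨hxL, hnd⟩
  have heq : Equiv.swap x z * D = List.formPerm (x :: z :: L) := by
    rw [hDL, List.formPerm_cons_cons]
  constructor
  · rw [heq]
    exact List.isCycle_formPerm hnd' (by simp)
  · rw [heq, List.support_formPerm_of_nodup _ hnd' (by intro w; simp)]
    rw [List.toFinset_cons, htf]

theorem cycle_mul_swap {D : Equiv.Perm α} (hD : D.IsCycle) {z x : α}
    (hz : z ∈ D.support) (hx : x ∉ D.support) :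
    Perm.IsCycle (D * Equiv.swap x z) ∧
      (D * Equiv.swap x z).support = insert x D.support := by
  have hz' : z ∈ D⁻¹.support := by rwa [Equiv.Perm.support_inv]
  have hx' : x ∉ D⁻¹.support := by rwa [Equiv.Perm.support_inv]
  obtain ⟨hc, hs⟩ := swap_mul_cycle hD.inv hz' hx'
  have heq : D * Equiv.swap x z = (Equiv.swap x z * D⁻¹)⁻¹ := by
    rw [mul_inv_rev, inv_inv, Equiv.swap_inv]
  rw [heq]
  refine ⟨hc.inv, ?_⟩
  rw [Equiv.Perm.support_inv, hs, Equiv.Perm.support_inv]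

theorem merge_cycles {C D : Equiv.Perm α} (hC : C.IsCycle) (hD : D.IsCycle)
    (hdisj : Disjoint C.support D.support) {x y : α}
    (hx : x ∈ C.support) (hy : y ∈ D.support) :
    Perm.IsCycle (Equiv.swap x y * D * C) ∧
      (Equiv.swap x y * D * C).support = C.support ∪ D.support := by
  obtain ⟨L, hCL, hndC, htfC, -⟩ := cycle_eq_formPerm hC hx
  obtain ⟨M, hDM, hndD, htfD, -⟩ := cycle_eq_formPerm hD hy
  have hnd : List.Nodup (x :: (L ++ y :: M)) := by
    rw [show x :: (L ++ y :: M) = (x :: L) ++ (y :: M) from rfl, List.nodup_append]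
    refine ⟨hndC, hndD, fun a ha b hb hab => ?_⟩
    exact Finset.disjoint_left.mp hdisj
      (htfC ▸ List.mem_toFinset.mpr ha) (htfD ▸ List.mem_toFinset.mpr (hab ▸ hb))
  have heq : Equiv.swap x y * D * C = List.formPerm (x :: (L ++ y :: M)) := by
    rw [formPerm_split x L (y :: M) hnd, List.formPerm_cons_cons, hCL, hDM, mul_assoc]
  constructor
  · rw [heq]
    exact List.isCycle_formPerm hnd (by simp; omega)
  · rw [heq, List.support_formPerm_of_nodup _ hnd (by intro w; simp)]
    ext w
    simp only [List.toFinset_cons, List.toFinset_append, ← htfC, ← htfD,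
      List.toFinset_cons, Finset.mem_union, Finset.mem_insert, List.mem_toFinset]
    aesop

theorem order_swap {P Q : Equiv.Perm α} (hP : P.IsCycle) (hQ : Q.IsCycle) :
    ∃ Q' : Equiv.Perm α, Q'.IsCycle ∧ Q'.support.card = Q.support.card ∧
      Q'.support ⊆ P.support ∪ Q.support ∧ P * Q = Q' * P := by
  refine ⟨P * Q * P⁻¹, hQ.conj, by simp, ?_, by group⟩
  intro w hw
  rw [Equiv.Perm.support_conj] at hw
  simp only [Finset.mem_map, Equiv.toEmbedding_apply] at hw
  obtain ⟨v, hv, rfl⟩ := hw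
  by_cases hvP : v ∈ P.support
  · exact Finset.mem_union_left _ (Equiv.Perm.apply_mem_support.mpr hvP)
  · rw [Equiv.Perm.notMem_support.mp hvP]
    exact Finset.mem_union_right _ hv



section Orbit

variable {σ C₁ C₂ : Equiv.Perm α}

theorem claim1 (hσ : σ = C₁ * C₂) (h₁ : C₁.IsCycle)
    (hov : (C₁.support ∩ C₂.support).Nonempty) {x : α}
    (hx : x ∈ C₁.support \ C₂.support)
    (h : ∀ j : ℕ, (σ ^ j) x ∉ C₁.support ∩ C₂.support) : False := by
  have aux : ∀ i : ℕ, (σ ^ i) x = (C₁ ^ i) x ∧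
      (C₁ ^ i) x ∈ C₁.support \ C₂.support := by
    intro i
    induction i with
    | zero => simpa using hx
    | succ i ih =>
      obtain ⟨heq, hmem⟩ := ih
      rw [Finset.mem_sdiff] at hmem
      have hfix : C₂ ((C₁ ^ i) x) = (C₁ ^ i) x := notMem_support.mp hmem.2
      have hstep : σ ((C₁ ^ i) x) = C₁ ((C₁ ^ i) x) := by
        rw [hσ, mul_apply, hfix]
      have heq' : (σ ^ (i + 1)) x = (C₁ ^ (i + 1)) x := by
        rw [pow_succ', pow_succ', mul_apply, mul_apply, heq, hstep]
      refine ⟨heq', ?_⟩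
      have hA : (C₁ ^ (i + 1)) x ∈ C₁.support := by
        rw [pow_succ', mul_apply]
        exact apply_mem_support.mpr hmem.1
      rw [Finset.mem_sdiff]
      refine ⟨hA, fun hB => ?_⟩
      exact h (i + 1) (heq' ▸ Finset.mem_inter.mpr ⟨hA, hB⟩)
  obtain ⟨y, hy⟩ := hov
  rw [Finset.mem_inter] at hy
  obtain ⟨i, hi⟩ := h₁.exists_pow_eq
    (mem_support.mp (Finset.mem_sdiff.mp hx).1) (mem_support.mp hy.1)
  exact ((aux i).2 |> Finset.mem_sdiff.mp).2 (hi ▸ hy.2)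

theorem claim2 (hσ : σ = C₁ * C₂) (h₁ : C₁.IsCycle) (h₂ : C₂.IsCycle)
    (hov : (C₁.support ∩ C₂.support).Nonempty) {x : α}
    (hx : x ∈ C₂.support \ C₁.support)
    (h : ∀ j : ℕ, (σ ^ j) x ∉ C₁.support ∩ C₂.support) : False := by
  have aux : ∀ i : ℕ, (σ ^ i) x = (C₂ ^ i) x ∧
      (C₂ ^ i) x ∈ C₂.support \ C₁.support := by
    intro i
    induction i with
    | zero => simpa using hx
    | succ i ih =>
      obtain ⟨heq, hmem⟩ := ih
      rw [Finset.mem_sdiff] at hmem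
      have hB : C₂ ((C₂ ^ i) x) ∈ C₂.support := apply_mem_support.mpr hmem.1
      by_cases hA : C₂ ((C₂ ^ i) x) ∈ C₁.support
      · -- σ of it lands in C₁.support; then use claim1
        exfalso
        have hstep : (σ ^ (i+1)) x = C₁ (C₂ ((C₂ ^ i) x)) := by
          rw [pow_succ', mul_apply, heq, hσ, mul_apply]
        have hmemA : (σ ^ (i+1)) x ∈ C₁.support := by
          rw [hstep]; exact apply_mem_support.mpr hA
        have hnotB : (σ ^ (i+1)) x ∉ C₂.support := fun hB' =>
          h (i+1) (Finset.mem_inter.mpr ⟨hmemA, hB'⟩)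
        refine claim1 hσ h₁ hov (Finset.mem_sdiff.mpr ⟨hmemA, hnotB⟩) ?_
        intro j hj
        have hpa : (σ ^ j) ((σ ^ (i+1)) x) = (σ ^ (j + (i+1))) x := by
          simp [pow_add, mul_apply]
        rw [hpa] at hj
        exact h (j + (i+1)) hj
      · have hstep : σ ((C₂ ^ i) x) = C₂ ((C₂ ^ i) x) := by
          rw [hσ, mul_apply, notMem_support.mp hA]
        have heq' : (σ ^ (i + 1)) x = (C₂ ^ (i + 1)) x := by
          rw [pow_succ', pow_succ', mul_apply, mul_apply, heq, hstep]
        exact ⟨heq', Finset.mem_sdiff.mpr ⟨by rw [pow_succ', mul_apply]; exact hB,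
          by rw [pow_succ', mul_apply]; exact hA⟩⟩
  obtain ⟨y, hy⟩ := hov
  rw [Finset.mem_inter] at hy
  obtain ⟨i, hi⟩ := h₂.exists_pow_eq
    (mem_support.mp (Finset.mem_sdiff.mp hx).1) (mem_support.mp hy.2)
  exact ((aux i).2 |> Finset.mem_sdiff.mp).2 (hi ▸ hy.1)

theorem orbit_meets (hσ : σ = C₁ * C₂) (h₁ : C₁.IsCycle) (h₂ : C₂.IsCycle)
    (hov : (C₁.support ∩ C₂.support).Nonempty) {x : α}
    (hx : x ∈ C₁.support ∪ C₂.support) :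
    ∃ j : ℕ, (σ ^ j) x ∈ C₁.support ∩ C₂.support := by
  by_contra h
  push_neg at h
  rw [Finset.mem_union] at hx
  by_cases hA : x ∈ C₁.support <;> by_cases hB : x ∈ C₂.support
  · exact h 0 (by simpa using Finset.mem_inter.mpr ⟨hA, hB⟩)
  · exact claim1 hσ h₁ hov (Finset.mem_sdiff.mpr ⟨hA, hB⟩) h
  · exact claim2 hσ h₁ h₂ hov (Finset.mem_sdiff.mpr ⟨hB, hA⟩) h
  · tauto

end Orbit

theorem forward_counting {σ C₁ C₂ : Equiv.Perm α} (hσ : σ = C₁ * C₂)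
    (h₁ : C₁.IsCycle) (h₂ : C₂.IsCycle)
    (hov : (C₁.support ∩ C₂.support).Nonempty) :
    σ.support.card + σ.cycleFactorsFinset.card ≤ C₁.support.card + C₂.support.card ∧
    C₁.support.card + σ.cycleFactorsFinset.card ≤ C₂.support.card + σ.support.card := by
  set A := C₁.support
  set B := C₂.support
  have hsupp : σ.support ⊆ A ∪ B := by
    rw [hσ]; exact support_mul_le C₁ C₂
  -- K₂ : fixed points of σ in A ∪ B, all lie in A ∩ B
  have hK₂ : (A ∪ B) \ σ.support ⊆ (A ∩ B) \ σ.support := by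
    intro x hx
    rw [Finset.mem_sdiff] at hx
    obtain ⟨j, hj⟩ := orbit_meets hσ h₁ h₂ hov hx.1
    rw [pow_apply_eq_self_of_apply_eq_self (notMem_support.mp hx.2)] at hj
    exact Finset.mem_sdiff.mpr ⟨hj, hx.2⟩
  -- factors inject into (A ∩ B) ∩ supp σ
  have hc : σ.cycleFactorsFinset.card ≤ ((A ∩ B) ∩ σ.support).card := by
    apply Finset.card_le_card_of_surjOn (fun y => σ.cycleOf y)
    intro γ hγ
    have hγc : Perm.IsCycle γ := (mem_cycleFactorsFinset_iff.mp hγ).1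
    obtain ⟨x₀, hx₀⟩ := Finset.card_pos.mp (lt_of_lt_of_le (by norm_num) hγc.two_le_card_support)
    have hx₀σ : x₀ ∈ σ.support := mem_cycleFactorsFinset_support_le hγ hx₀
    obtain ⟨j, hj⟩ := orbit_meets hσ h₁ h₂ hov (hsupp hx₀σ)
    refine ⟨(σ ^ j) x₀, ?_, ?_⟩
    · simp only [Finset.coe_inter, Set.mem_inter_iff, Finset.mem_coe]
      exact ⟨Finset.mem_inter.mp hj, pow_apply_mem_support.mpr hx₀σ⟩
    · show σ.cycleOf ((σ ^ j) x₀) = γ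
      rw [cycleOf_self_apply_pow]
      exact (cycle_is_cycleOf hx₀ hγ).symm
  have e1 : (A ∪ B).card + (A ∩ B).card = A.card + B.card :=
    Finset.card_union_add_card_inter A B
  have e2 : ((A ∪ B) \ σ.support).card + σ.support.card = (A ∪ B).card :=
    Finset.card_sdiff_add_card_eq_card hsupp
  have e3 : ((A ∩ B) ∩ σ.support).card + ((A ∩ B) \ σ.support).card = (A ∩ B).card := by
    rw [Finset.card_inter_add_card_sdiff]
  have e4 : ((A ∪ B) \ σ.support).card ≤ ((A ∩ B) \ σ.support).card :=
    Finset.card_le_card hK₂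
  have e4' : ((A ∩ B) \ σ.support).card ≤ ((A ∪ B) \ σ.support).card :=
    Finset.card_le_card (fun x hx => by
      rw [Finset.mem_sdiff] at hx ⊢
      exact ⟨Finset.mem_union_left _ (Finset.mem_inter.mp hx.1).1, hx.2⟩)
  have e5 : (A ∩ B).card ≤ B.card := Finset.card_le_card Finset.inter_subset_right
  omega




theorem card_factors_eq (σ : Equiv.Perm α) :
    σ.cycleFactorsFinset.card = Multiset.card σ.cycleType := by
  rw [cycleType_def, Multiset.card_map]
  rfl

theorem parity_lemma {a b : ℕ} (h : ((-1 : ℤˣ)) ^ a = (-1 : ℤˣ) ^ b) :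
    a % 2 = b % 2 := by
  rcases Nat.even_or_odd a with ha | ha <;> rcases Nat.even_or_odd b with hb | hb
  · rw [Nat.even_iff] at ha hb; omega
  · rw [Even.neg_one_pow ha, Odd.neg_one_pow hb] at h; exact absurd h (by decide)
  · rw [Odd.neg_one_pow ha, Even.neg_one_pow hb] at h; exact absurd h (by decide)
  · rw [Nat.odd_iff] at ha hb; omega

theorem sign_parity {σ C₁ C₂ : Equiv.Perm α} (hσ : σ = C₁ * C₂)
    (h₁ : C₁.IsCycle) (h₂ : C₂.IsCycle) :
    (σ.support.card + σ.cycleFactorsFinset.card) % 2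
      = (C₁.support.card + C₂.support.card) % 2 := by
  apply parity_lemma
  have e1 : Equiv.Perm.sign σ = (-1 : ℤˣ) ^ (σ.support.card + σ.cycleFactorsFinset.card) := by
    rw [sign_of_cycleType, sum_cycleType, card_factors_eq]
  have e2 : Equiv.Perm.sign σ = (-1 : ℤˣ) ^ (C₁.support.card + C₂.support.card) := by
    rw [hσ, Equiv.Perm.sign_mul, h₁.sign, h₂.sign, pow_add]
    rw [neg_mul_neg]
  rw [← e1, e2]

theorem factors_pair {C₁ C₂ : Equiv.Perm α} (h₁ : C₁.IsCycle) (h₂ : C₂.IsCycle)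
    (hd : Disjoint C₁.support C₂.support) :
    (C₁ * C₂).cycleFactorsFinset = {C₁, C₂} ∧ C₁ ≠ C₂ := by
  have hdp : Equiv.Perm.Disjoint C₁ C₂ := disjoint_iff_disjoint_support.mpr hd
  have hne : C₁ ≠ C₂ := by
    rintro rfl
    have := h₁.two_le_card_support
    have h0 : C₁.support = ∅ := by
      rw [← Finset.disjoint_self_iff_empty]; exact hd
    rw [h0] at this; simp at this
  refine ⟨?_, hne⟩
  rw [hdp.cycleFactorsFinset_mul_eq_union, h₁.cycleFactorsFinset_eq_singleton,
    h₂.cycleFactorsFinset_eq_singleton]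
  rfl

theorem prod_of_factors_pair {σ c₁ c₂ : Equiv.Perm α} (hne : c₁ ≠ c₂)
    (hfac : σ.cycleFactorsFinset = {c₁, c₂}) : σ = c₁ * c₂ := by
  have hc₁ : c₁ ∈ σ.cycleFactorsFinset := by rw [hfac]; simp
  have hd : Equiv.Perm.Disjoint (σ * c₁⁻¹) c₁ :=
    disjoint_mul_inv_of_mem_cycleFactorsFinset hc₁
  have hc₁c : Perm.IsCycle c₁ := (mem_cycleFactorsFinset_iff.mp hc₁).1
  have hu := hd.cycleFactorsFinset_mul_eq_union
  have hre : σ * c₁⁻¹ * c₁ = σ := by group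
  rw [hre, hfac, hc₁c.cycleFactorsFinset_eq_singleton] at hu
  have hτ : (σ * c₁⁻¹).cycleFactorsFinset = {c₂} := by
    have hc₁n : c₁ ∉ (σ * c₁⁻¹).cycleFactorsFinset := by
      intro hmem
      have hsub := mem_cycleFactorsFinset_support_le hmem
      have hdss : Disjoint (σ * c₁⁻¹).support c₁.support :=
        disjoint_iff_disjoint_support.mp hd
      have hds : Disjoint c₁.support c₁.support :=
        Finset.disjoint_of_subset_left hsub hdss
      rw [Finset.disjoint_self_iff_empty] at hds
      have h2 := hc₁c.two_le_card_support
      rw [hds] at h2; simp at h2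
    apply Finset.Subset.antisymm
    · intro g hg
      have : g ∈ ({c₁, c₂} : Finset (Equiv.Perm α)) := by
        rw [hu]; exact Finset.mem_union_left _ hg
      simp only [Finset.mem_insert, Finset.mem_singleton] at this
      rcases this with h | h
      · exact absurd (h ▸ hg) hc₁n
      · rw [h]; simp
    · intro g hg
      simp only [Finset.mem_singleton] at hg
      rw [hg]
      have : c₂ ∈ (σ * c₁⁻¹).cycleFactorsFinset ∪ {c₁} := by
        rw [← hu]; simp
      simp only [Finset.mem_union, Finset.mem_singleton] at this
      rcases this with h | h
      · exact h
      · exact absurd h hne.symm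
  have hc₂ : σ * c₁⁻¹ = c₂ := (cycleFactorsFinset_eq_singleton_iff.mp hτ).2
  have : σ = c₂ * c₁ := by rw [← hc₂]; group
  rw [this]
  have hcomm : Commute c₂ c₁ := by
    have := hd.commute
    rw [hc₂] at this
    exact this
  rw [hcomm.eq]

-- removal of one cycle
theorem remove_cycle {σ γ : Equiv.Perm α} (hγ : γ ∈ σ.cycleFactorsFinset) :
    Equiv.Perm.Disjoint (σ * γ⁻¹) γ ∧ σ = (σ * γ⁻¹) * γ ∧
      σ.support = (σ * γ⁻¹).support ∪ γ.support ∧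
      Disjoint (σ * γ⁻¹).support γ.support ∧
      (σ * γ⁻¹).cycleFactorsFinset = σ.cycleFactorsFinset.erase γ := by
  have hd : Equiv.Perm.Disjoint (σ * γ⁻¹) γ :=
    disjoint_mul_inv_of_mem_cycleFactorsFinset hγ
  have hγc : Perm.IsCycle γ := (mem_cycleFactorsFinset_iff.mp hγ).1
  have hdss : Disjoint (σ * γ⁻¹).support γ.support :=
    disjoint_iff_disjoint_support.mp hd
  have hprod : σ = (σ * γ⁻¹) * γ := by group
  refine ⟨hd, hprod, ?_, hdss, ?_⟩
  · conv_lhs => rw [hprod]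
    exact hd.support_mul
  · have := hd.cycleFactorsFinset_mul_eq_union
    rw [← hprod, hγc.cycleFactorsFinset_eq_singleton] at this
    rw [this]
    rw [Finset.union_comm]
    rw [Finset.erase_union_distrib]
    simp only [Finset.erase_singleton, Finset.empty_union]
    rw [Finset.erase_eq_of_notMem]
    intro hmem
    have hsub := mem_cycleFactorsFinset_support_le hmem
    have hds : Disjoint γ.support γ.support :=
      Finset.disjoint_of_subset_left hsub hdss
    rw [Finset.disjoint_self_iff_empty] at hds
    have h2 := hγc.two_le_card_support
    rw [hds] at h2; simp at h2

end Helpers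

section BWs
variable {α : Type*} [DecidableEq α] [Fintype α]



theorem BW : ∀ (N : ℕ) (σ : Equiv.Perm α) (l₁ l₂ s : ℕ) (R : Finset α),
    l₁ + l₂ ≤ N →
    2 ≤ l₂ → l₂ ≤ l₁ →
    l₁ + l₂ = σ.support.card + σ.cycleFactorsFinset.card + 2 * s →
    l₁ + σ.cycleFactorsFinset.card ≤ l₂ + σ.support.card →
    Disjoint σ.support R →
    (l₁ ≤ σ.support.card ∨ l₁ + R.card ≤ Fintype.card α) →
    ∃ C₁ C₂ : Equiv.Perm α, C₁.IsCycle ∧ C₁.support.card = l₁ ∧ C₂.IsCycle ∧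
      C₂.support.card = l₂ ∧ σ = C₁ * C₂ ∧ Disjoint (C₁.support ∪ C₂.support) R := by
  intro N
  induction N with
  | zero => intro σ l₁ l₂ s R hN h3 h2 hsum hdiff hR hroom; omega
  | succ N ih =>
    intro σ l₁ l₂ s R hN h3 h2 hsum hdiff hR hroom
    set m := σ.support.card with hm
    set c := σ.cycleFactorsFinset.card with hc
    by_cases hc0 : c = 0
    · -- σ = 1
      have hσ1 : σ = 1 := by
        rw [← cycleFactorsFinset_eq_empty_iff]
        exact Finset.card_eq_zero.mp hc0
      have hm0 : m = 0 := by rw [hm, hσ1]; simp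
      have hll : l₁ = l₂ := by omega
      have hroom' : l₁ + R.card ≤ Fintype.card α := by
        rcases hroom with h | h
        · omega
        · exact h
      have hRc : l₁ ≤ Rᶜ.card := by
        rw [Finset.card_compl]
        omega
      obtain ⟨T, hTsub, hTcard⟩ := Finset.exists_subset_card_eq hRc
      have hnd : T.toList.Nodup := Finset.nodup_toList T
      have hlen : T.toList.length = l₁ := by rw [Finset.length_toList, hTcard]
      have hlen2 : 2 ≤ T.toList.length := by omega
      set C : Equiv.Perm α := T.toList.formPerm with hC
      have hCc : Perm.IsCycle C := List.isCycle_formPerm hnd hlen2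
      have hCs : C.support = T := by
        rw [hC, List.support_formPerm_of_nodup _ hnd (fun x hx => by
          rw [hx] at hlen2; simp at hlen2), Finset.toList_toFinset]
      have hCcard : C.support.card = l₁ := by rw [hCs, hTcard]
      refine ⟨C, C⁻¹, hCc, hCcard, hCc.inv, ?_, ?_, ?_⟩
      · rw [Equiv.Perm.support_inv, hCcard, hll]
      · rw [hσ1, mul_inv_cancel]
      · rw [Equiv.Perm.support_inv, hCs, Finset.union_self]
        exact Finset.disjoint_left.mpr (fun x hx =>
          Finset.mem_compl.mp (hTsub hx))
    · have hc1 : 1 ≤ c := by omega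
      -- m ≥ 2c
      have hm2c : 2 * c ≤ m := by
        have : ∀ x ∈ σ.cycleType, 2 ≤ x := fun x hx => two_le_of_mem_cycleType hx
        have hsum' := Equiv.Perm.sum_cycleType σ
        have hcard : Multiset.card σ.cycleType = c := (card_factors_eq σ).symm
        calc 2 * c = Multiset.card σ.cycleType • 2 := by rw [hcard, smul_eq_mul, Nat.mul_comm]
        _ ≤ σ.cycleType.sum := Multiset.card_nsmul_le_sum this
        _ = m := hsum'
      by_cases hs0 : s = 0
      · by_cases hcc : c = 1
        · -- SPLIT base case: σ is a single cycle, l₁ + l₂ = m + 1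
          obtain ⟨γ, hγ⟩ := Finset.card_eq_one.mp hcc
          have hσγ : σ.IsCycle ∧ σ = γ := cycleFactorsFinset_eq_singleton_iff.mp hγ
          have hσc : σ.IsCycle := hσγ.1
          have hm2 : 2 ≤ m := hσc.two_le_card_support
          have hsum1 : l₁ + l₂ = m + 1 := by omega
          obtain ⟨z, hz⟩ := Finset.card_pos.mp (show 0 < σ.support.card by omega)
          obtain ⟨L, hσL, hnd, htf, hlenL⟩ := cycle_eq_formPerm hσc hz
          have hLlen : L.length = m - 1 := by
            simp only [List.length_cons] at hlenL; omega
          set L₁ := L.take (l₂ - 1) with hL₁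
          set L₂ := L.drop (l₂ - 1) with hL₂
          have hl₂m : l₂ - 1 ≤ L.length := by omega
          have hL₁len : L₁.length = l₂ - 1 := by
            rw [hL₁, List.length_take]; omega
          have hL₂len : L₂.length = l₁ - 1 := by
            rw [hL₂, List.length_drop]; omega
          have happ : L₁ ++ L₂ = L := List.take_append_drop _ _
          have hndz : List.Nodup (z :: (L₁ ++ L₂)) := by rw [happ]; exact hnd
          have hsplit := formPerm_split z L₁ L₂ hndz
          rw [happ] at hsplit
          set C₁ := List.formPerm (z :: L₂) with hC₁
          set C₂ := List.formPerm (z :: L₁) with hC₂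
          have hndL := List.nodup_cons.mp hnd
          have hnd₂ : List.Nodup (z :: L₂) := List.nodup_cons.mpr
            ⟨fun hx => hndL.1 (happ ▸ List.mem_append_right L₁ hx),
             (List.sublist_append_right L₁ L₂).nodup (happ ▸ hndL.2)⟩
          have hnd₁ : List.Nodup (z :: L₁) := List.nodup_cons.mpr
            ⟨fun hx => hndL.1 (happ ▸ List.mem_append_left L₂ hx),
             (List.sublist_append_left L₁ L₂).nodup (happ ▸ hndL.2)⟩
          have hlen₂ : (z :: L₂).length = l₁ := by simp [hL₂len]; omega
          have hlen₁ : (z :: L₁).length = l₂ := by simp [hL₁len]; omega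
          have hC₁c : Perm.IsCycle C₁ := List.isCycle_formPerm hnd₂ (by omega)
          have hC₂c : Perm.IsCycle C₂ := List.isCycle_formPerm hnd₁ (by omega)
          have hC₁s : C₁.support = (z :: L₂).toFinset :=
            List.support_formPerm_of_nodup _ hnd₂ (fun x hx => by
              rw [hx] at hlen₂; simp at hlen₂; omega)
          have hC₂s : C₂.support = (z :: L₁).toFinset :=
            List.support_formPerm_of_nodup _ hnd₁ (fun x hx => by
              rw [hx] at hlen₁; simp at hlen₁; omega)
          refine ⟨C₁, C₂, hC₁c, ?_, hC₂c, ?_, ?_, ?_⟩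
          · rw [hC₁s, List.card_toFinset, hnd₂.dedup, hlen₂]
          · rw [hC₂s, List.card_toFinset, hnd₁.dedup, hlen₁]
          · rw [hσL]; exact hsplit
          · have hsub : C₁.support ∪ C₂.support ⊆ σ.support := by
              rw [hC₁s, hC₂s, ← htf]
              intro x hx
              simp only [Finset.mem_union, List.mem_toFinset, List.mem_cons] at hx ⊢
              rcases hx with (h | h) | (h | h)
              · exact Or.inl h
              · exact Or.inr (happ ▸ List.mem_append_right L₁ h)
              · exact Or.inl h
              · exact Or.inr (happ ▸ List.mem_append_left L₂ h)
            exact Finset.disjoint_of_subset_left hsub hR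
        · -- c ≥ 2, s = 0
          have hc2 : 2 ≤ c := by omega
          -- l₁ ≤ m
          have hl₁m : l₁ ≤ m := by omega
          by_cases hl₂2 : l₂ = 2
          · -- c = 2, l₁ = m : merge
            have hcc2 : c = 2 := by omega
            have hl₁ : l₁ = m := by omega
            obtain ⟨γ₁, γ₂, hne, hfac⟩ := Finset.card_eq_two.mp (hc ▸ hcc2 : σ.cycleFactorsFinset.card = 2)
            have hγ₁m : γ₁ ∈ σ.cycleFactorsFinset := by rw [hfac]; simp
            have hγ₂m : γ₂ ∈ σ.cycleFactorsFinset := by rw [hfac]; simp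
            have hγ₁c : Perm.IsCycle γ₁ := (mem_cycleFactorsFinset_iff.mp hγ₁m).1
            have hγ₂c : Perm.IsCycle γ₂ := (mem_cycleFactorsFinset_iff.mp hγ₂m).1
            have hσ12 : σ = γ₁ * γ₂ := prod_of_factors_pair hne hfac
            have hdp : Equiv.Perm.Disjoint γ₁ γ₂ :=
              (cycleFactorsFinset_pairwise_disjoint σ) hγ₁m hγ₂m hne
            have hds : Disjoint γ₁.support γ₂.support :=
              disjoint_iff_disjoint_support.mp hdp
            obtain ⟨x, hx⟩ := Finset.card_pos.mp
              (lt_of_lt_of_le (by norm_num) hγ₁c.two_le_card_support)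
            obtain ⟨y, hy⟩ := Finset.card_pos.mp
              (lt_of_lt_of_le (by norm_num) hγ₂c.two_le_card_support)
            have hxy : x ≠ y := fun h => Finset.disjoint_left.mp hds hx (h ▸ hy)
            have hdsi : Disjoint γ₁⁻¹.support γ₂⁻¹.support := by
              rwa [Equiv.Perm.support_inv, Equiv.Perm.support_inv]
            obtain ⟨hEc, hEs⟩ := merge_cycles hγ₁c.inv hγ₂c.inv hdsi
              (by rwa [Equiv.Perm.support_inv]) (by rwa [Equiv.Perm.support_inv])
            set E := Equiv.swap x y * γ₂⁻¹ * γ₁⁻¹ with hE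
            have hEinv : E⁻¹ = γ₁ * γ₂ * Equiv.swap x y := by
              rw [hE, mul_inv_rev, mul_inv_rev, inv_inv, inv_inv, Equiv.swap_inv, mul_assoc]
            have hsuppσ : σ.support = γ₁.support ∪ γ₂.support := by
              rw [hσ12]; exact hdp.support_mul
            refine ⟨E⁻¹, Equiv.swap x y, hEc.inv, ?_, isCycle_swap hxy, ?_, ?_, ?_⟩
            · rw [Equiv.Perm.support_inv, hEs, Equiv.Perm.support_inv,
                Equiv.Perm.support_inv, ← hsuppσ]
              omega
            · rw [Equiv.Perm.support_swap hxy]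
              rw [Finset.card_insert_of_notMem (by simp [hxy]), Finset.card_singleton]
              omega
            · rw [hEinv, mul_assoc, Equiv.swap_mul_self, mul_one, hσ12]
            · apply Finset.disjoint_of_subset_left _ hR
              intro w hw
              simp only [Finset.mem_union, Equiv.Perm.support_inv, hEs,
                Equiv.Perm.support_inv, Equiv.Perm.support_swap hxy] at hw
              rw [hsuppσ]
              rcases hw with (h | h) | h
              · exact Finset.mem_union_left _ h
              · exact Finset.mem_union_right _ h
              · simp only [Finset.mem_insert, Finset.mem_singleton] at h
                rcases h with rfl | rfl
                · exact Finset.mem_union_left _ hx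
                · exact Finset.mem_union_right _ hy
          · -- l₂ ≥ 3
            have hl₂3 : 3 ≤ l₂ := by omega
            obtain ⟨γ, hγmem, hγmin⟩ := Finset.exists_min_image σ.cycleFactorsFinset
              (fun g => g.support.card) (Finset.card_pos.mp (by omega))
            set p := γ.support.card with hp
            have hγc : Perm.IsCycle γ := (mem_cycleFactorsFinset_iff.mp hγmem).1
            have hp2 : 2 ≤ p := hγc.two_le_card_support
            -- m = sum of cycle lengths ≥ c * p
            have hmsum : m = ∑ g ∈ σ.cycleFactorsFinset, g.support.card := by
              rw [hm, ← Equiv.Perm.sum_cycleType, Equiv.Perm.cycleType_def]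
              rfl
            have hmcp : c * p ≤ m := by
              rw [hmsum, hc]
              calc σ.cycleFactorsFinset.card * p
                  = σ.cycleFactorsFinset.card • p := by rw [smul_eq_mul]
                _ ≤ ∑ g ∈ σ.cycleFactorsFinset, g.support.card :=
                    Finset.card_nsmul_le_sum _ _ _ (fun g hg => hγmin g hg)
            have hkey : c + 2 * p ≤ c * p + 2 := by
              have h1 : c * p = (c-2)*(p-2) + 2*(c-2) + 2*(p-2) + 4 := by
                have hc' : c = (c-2)+2 := by omega
                have hp' : p = (p-2)+2 := by omega
                calc c * p = ((c-2)+2) * ((p-2)+2) := by rw [← hc', ← hp']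
                _ = (c-2)*(p-2) + 2*(c-2) + 2*(p-2) + 4 := by ring
              omega
            have h2p : 2 * p ≤ c * p := Nat.mul_le_mul_right p hc2
            by_cases hl₁p : l₁ ≤ p + 1
            · -- forced c = 2, l₁ = l₂ = p + 1, both cycles length p
              have hcc2 : c = 2 := by omega
              obtain ⟨a, b, hne, hfac⟩ := Finset.card_eq_two.mp
                (hc ▸ hcc2 : σ.cycleFactorsFinset.card = 2)
              have ham : a ∈ σ.cycleFactorsFinset := by rw [hfac]; simp
              have hbm : b ∈ σ.cycleFactorsFinset := by rw [hfac]; simp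
              have hac : Perm.IsCycle a := (mem_cycleFactorsFinset_iff.mp ham).1
              have hbc : Perm.IsCycle b := (mem_cycleFactorsFinset_iff.mp hbm).1
              have hσab : σ = a * b := prod_of_factors_pair hne hfac
              have hdp : Equiv.Perm.Disjoint a b :=
                (cycleFactorsFinset_pairwise_disjoint σ) ham hbm hne
              have hds : Disjoint a.support b.support :=
                disjoint_iff_disjoint_support.mp hdp
              have hma : p ≤ a.support.card := hγmin a ham
              have hmb : p ≤ b.support.card := hγmin b hbm
              have hmab : m = a.support.card + b.support.card := by
                rw [hm, hσab, hdp.support_mul, Finset.card_union_of_disjoint hds]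
              have hva : a.support.card = p := by omega
              have hvb : b.support.card = p := by omega
              have hl₁v : l₁ = p + 1 := by omega
              have hl₂v : l₂ = p + 1 := by omega
              obtain ⟨x, hx⟩ := Finset.card_pos.mp
                (lt_of_lt_of_le (by norm_num) hac.two_le_card_support)
              obtain ⟨y, hy⟩ := Finset.card_pos.mp
                (lt_of_lt_of_le (by norm_num) hbc.two_le_card_support)
              have hynotA : y ∉ a.support := fun h => Finset.disjoint_left.mp hds h hy
              have hxnotB : x ∉ b.support := fun h => Finset.disjoint_right.mp hds h hx
              obtain ⟨hC₁c, hC₁s⟩ := cycle_mul_swap hac hx hynotA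
              obtain ⟨hC₂c, hC₂s⟩ := swap_mul_cycle hbc hy hxnotB
              refine ⟨a * Equiv.swap y x, Equiv.swap x y * b, hC₁c, ?_, hC₂c, ?_, ?_, ?_⟩
              · rw [hC₁s, Finset.card_insert_of_notMem hynotA, hva, hl₁v]
              · rw [hC₂s, Finset.card_insert_of_notMem hxnotB, hvb, hl₂v]
              · rw [show Equiv.swap y x = Equiv.swap x y from Equiv.swap_comm y x,
                  mul_assoc, ← mul_assoc (Equiv.swap x y), Equiv.swap_mul_self,
                  one_mul, hσab]
              · apply Finset.disjoint_of_subset_left _ hR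
                intro w hw
                rw [hσab, hdp.support_mul]
                simp only [Finset.mem_union, hC₁s, hC₂s, Finset.mem_insert] at hw ⊢
                rcases hw with (rfl | h) | (rfl | h)
                · exact Or.inr hy
                · exact Or.inl h
                · exact Or.inl hx
                · exact Or.inr h
            · -- main c-step: recurse on σ * γ⁻¹
              have hl₁p2 : p + 2 ≤ l₁ := by omega
              obtain ⟨hdjP, hprod, hsuppU, hdss, hfacE⟩ := remove_cycle hγmem
              set σ' := σ * γ⁻¹ with hσ'
              have hm' : σ'.support.card + p = m := by
                rw [hm, hsuppU, Finset.card_union_of_disjoint hdss]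
              have hc' : σ'.cycleFactorsFinset.card + 1 = c := by
                rw [hc, hfacE, Finset.card_erase_of_mem hγmem]
                omega
              obtain ⟨y, hyγ⟩ := Finset.card_pos.mp
                (lt_of_lt_of_le (by norm_num) hγc.two_le_card_support)
              have hyσ : y ∈ σ.support := mem_cycleFactorsFinset_support_le hγmem hyγ
              have hsub : ∀ (a b : ℕ), a = max (l₁ - p) (l₂ - 1) → b = min (l₁ - p) (l₂ - 1) →
                  ∃ D₁ D₂ : Equiv.Perm α, D₁.IsCycle ∧ D₁.support.card = a ∧
                    D₂.IsCycle ∧ D₂.support.card = b ∧ σ' = D₁ * D₂ ∧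
                    Disjoint (D₁.support ∪ D₂.support) (R ∪ γ.support) := by
                intro a b ha hb
                have hcases : (a = l₁ - p ∧ b = l₂ - 1 ∧ l₂ - 1 ≤ l₁ - p) ∨
                    (a = l₂ - 1 ∧ b = l₁ - p ∧ l₁ - p < l₂ - 1) := by
                  rcases max_cases (l₁ - p) (l₂ - 1) with ⟨hmx, hge⟩ | ⟨hmx, hlt⟩ <;>
                    rcases min_cases (l₁ - p) (l₂ - 1) with ⟨hmn, hge'⟩ | ⟨hmn, hlt'⟩ <;>
                    first
                      | (left; omega)
                      | (right; omega)
                apply ih σ' a b 0 (R ∪ γ.support)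
                · rcases hcases with ⟨h1', h2', h3'⟩ | ⟨h1', h2', h3'⟩ <;> omega
                · rcases hcases with ⟨h1', h2', h3'⟩ | ⟨h1', h2', h3'⟩ <;> omega
                · rcases hcases with ⟨h1', h2', h3'⟩ | ⟨h1', h2', h3'⟩ <;> omega
                · rcases hcases with ⟨h1', h2', h3'⟩ | ⟨h1', h2', h3'⟩ <;> omega
                · rcases hcases with ⟨h1', h2', h3'⟩ | ⟨h1', h2', h3'⟩ <;> omega
                · rw [Finset.disjoint_union_right]
                  refine ⟨Finset.disjoint_of_subset_left ?_ hR, hdss⟩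
                  rw [hsuppU]
                  exact Finset.subset_union_left
                · left
                  rcases hcases with ⟨h1', h2', h3'⟩ | ⟨h1', h2', h3'⟩ <;> omega
              by_cases hfl : l₂ - 1 ≤ l₁ - p
              · -- unflipped
                obtain ⟨D₁, D₂, hD₁c, hD₁card, hD₂c, hD₂card, hσ'D, hDR⟩ :=
                  hsub (l₁ - p) (l₂ - 1) (by omega) (by omega)
                have hDRdisj := Finset.disjoint_union_right.mp
                  (Finset.disjoint_union_left.mp hDR).1
                have hDRdisj2 := Finset.disjoint_union_right.mp
                  (Finset.disjoint_union_left.mp hDR).2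
                have hov : (D₁.support ∩ D₂.support).Nonempty := by
                  by_contra hcon
                  rw [Finset.not_nonempty_iff_eq_empty] at hcon
                  have hdsD : Disjoint D₁.support D₂.support :=
                    Finset.disjoint_iff_inter_eq_empty.mpr hcon
                  have hdpD : Equiv.Perm.Disjoint D₁ D₂ :=
                    disjoint_iff_disjoint_support.mpr hdsD
                  have : σ'.support.card = (l₁ - p) + (l₂ - 1) := by
                    rw [hσ'D, hdpD.card_support_mul, hD₁card, hD₂card]
                  omega
                obtain ⟨x, hxmem⟩ := hov
                rw [Finset.mem_inter] at hxmem
                have hynotD₂ : y ∉ D₂.support :=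
                  fun h => Finset.disjoint_left.mp hDRdisj2.2 h hyγ
                have hynotD₁ : y ∉ D₁.support :=
                  fun h => Finset.disjoint_left.mp hDRdisj.2 h hyγ
                have hdsD₁γ : Disjoint D₁.support γ.support := hDRdisj.2
                have hdsi : Disjoint D₁⁻¹.support γ⁻¹.support := by
                  rwa [Equiv.Perm.support_inv, Equiv.Perm.support_inv]
                obtain ⟨hEc, hEs⟩ := merge_cycles hD₁c.inv hγc.inv hdsi
                  (by rw [Equiv.Perm.support_inv]; exact hxmem.1)
                  (by rw [Equiv.Perm.support_inv]; exact hyγ)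
                set E := Equiv.swap x y * γ⁻¹ * D₁⁻¹ with hE
                have hEinv : E⁻¹ = D₁ * γ * Equiv.swap x y := by
                  rw [hE, mul_inv_rev, mul_inv_rev, inv_inv, inv_inv, Equiv.swap_inv, mul_assoc]
                obtain ⟨hC₂c, hC₂s⟩ := swap_mul_cycle hD₂c hxmem.2 hynotD₂
                have hγD₂comm : γ * D₂ = D₂ * γ := by
                  have hdsγD₂' : Disjoint γ.support D₂.support := hDRdisj2.2.symm
                  exact (disjoint_iff_disjoint_support.mpr hdsγD₂').commute.eq
                refine ⟨E⁻¹, Equiv.swap y x * D₂, hEc.inv, ?_, hC₂c, ?_, ?_, ?_⟩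
                · rw [Equiv.Perm.support_inv, hEs, Equiv.Perm.support_inv,
                    Equiv.Perm.support_inv, Finset.card_union_of_disjoint hdsD₁γ,
                    hD₁card]
                  omega
                · rw [hC₂s, Finset.card_insert_of_notMem hynotD₂, hD₂card]
                  omega
                · rw [hEinv, show Equiv.swap y x = Equiv.swap x y from Equiv.swap_comm y x]
                  rw [show D₁ * γ * Equiv.swap x y * (Equiv.swap x y * D₂) =
                    D₁ * γ * (Equiv.swap x y * Equiv.swap x y) * D₂ from by group]
                  rw [Equiv.swap_mul_self, mul_one, mul_assoc, hγD₂comm, ← mul_assoc,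
                    ← hσ'D, ← hprod]
                · rw [Equiv.Perm.support_inv, hEs, Equiv.Perm.support_inv,
                    Equiv.Perm.support_inv, hC₂s]
                  rw [Finset.disjoint_left]
                  intro w hw
                  simp only [Finset.mem_union, Finset.mem_insert] at hw
                  rcases hw with (h | h) | (rfl | h)
                  · exact fun hc => Finset.disjoint_left.mp hDRdisj.1 h hc
                  · exact fun hc => Finset.disjoint_left.mp hR
                      (mem_cycleFactorsFinset_support_le hγmem h) hc
                  · exact fun hc => Finset.disjoint_left.mp hR hyσ hc
                  · exact fun hc => Finset.disjoint_left.mp hDRdisj2.1 h hc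
              · -- flipped
                obtain ⟨D₁, D₂, hD₁c, hD₁card, hD₂c, hD₂card, hσ'D, hDR⟩ :=
                  hsub (l₂ - 1) (l₁ - p) (by omega) (by omega)
                have hDRdisj := Finset.disjoint_union_right.mp
                  (Finset.disjoint_union_left.mp hDR).1
                have hDRdisj2 := Finset.disjoint_union_right.mp
                  (Finset.disjoint_union_left.mp hDR).2
                have hov : (D₁.support ∩ D₂.support).Nonempty := by
                  by_contra hcon
                  rw [Finset.not_nonempty_iff_eq_empty] at hcon
                  have hdsD : Disjoint D₁.support D₂.support :=
                    Finset.disjoint_iff_inter_eq_empty.mpr hcon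
                  have hdpD : Equiv.Perm.Disjoint D₁ D₂ :=
                    disjoint_iff_disjoint_support.mpr hdsD
                  have : σ'.support.card = (l₂ - 1) + (l₁ - p) := by
                    rw [hσ'D, hdpD.card_support_mul, hD₁card, hD₂card]
                  omega
                obtain ⟨x, hxmem⟩ := hov
                rw [Finset.mem_inter] at hxmem
                have hynotD₂ : y ∉ D₂.support :=
                  fun h => Finset.disjoint_left.mp hDRdisj2.2 h hyγ
                have hynotD₁ : y ∉ D₁.support :=
                  fun h => Finset.disjoint_left.mp hDRdisj.2 h hyγ
                have hdsγD₂ : Disjoint γ.support D₂.support := hDRdisj2.2.symm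
                obtain ⟨hC₂c, hC₂s⟩ := cycle_mul_swap hD₁c hxmem.1 hynotD₁
                obtain ⟨hC₁c, hC₁s⟩ := merge_cycles hγc hD₂c hdsγD₂ hyγ hxmem.2
                -- σ = (D₁ * swap y x) * (swap y x * D₂ * γ)
                have hσeq : σ = (D₁ * Equiv.swap y x) * (Equiv.swap y x * D₂ * γ) := by
                  rw [show (D₁ * Equiv.swap y x) * (Equiv.swap y x * D₂ * γ) =
                    D₁ * (Equiv.swap y x * Equiv.swap y x) * D₂ * γ from by group]
                  rw [Equiv.swap_mul_self, mul_one, ← hσ'D, ← hprod]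
                obtain ⟨Q', hQ'c, hQ'card, hQ'sub, hQ'eq⟩ := order_swap hC₂c hC₁c
                refine ⟨Q', D₁ * Equiv.swap y x, hQ'c, ?_, hC₂c, ?_, ?_, ?_⟩
                · rw [hQ'card, hC₁s, Finset.card_union_of_disjoint hdsγD₂, hD₂card]
                  omega
                · rw [hC₂s, Finset.card_insert_of_notMem hynotD₁, hD₁card]
                  omega
                · rw [hσeq, hQ'eq]
                · have hbig : Q'.support ∪ (D₁ * Equiv.swap y x).support ⊆
                      (D₁.support ∪ D₂.support) ∪ γ.support ∪ {y} := by
                    intro w hw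
                    rcases Finset.mem_union.mp hw with h | h
                    · have := hQ'sub h
                      rcases Finset.mem_union.mp this with h' | h'
                      · rw [hC₂s] at h'
                        rcases Finset.mem_insert.mp h' with rfl | h''
                        · exact Finset.mem_union_right _ (Finset.mem_singleton_self _)
                        · exact Finset.mem_union_left _ (Finset.mem_union_left _
                            (Finset.mem_union_left _ h''))
                      · rw [hC₁s] at h'
                        rcases Finset.mem_union.mp h' with h'' | h''
                        · exact Finset.mem_union_left _ (Finset.mem_union_right _ h'')
                        · exact Finset.mem_union_left _ (Finset.mem_union_left _
                            (Finset.mem_union_right _ h''))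
                    · rw [hC₂s] at h
                      rcases Finset.mem_insert.mp h with rfl | h''
                      · exact Finset.mem_union_right _ (Finset.mem_singleton_self _)
                      · exact Finset.mem_union_left _ (Finset.mem_union_left _
                          (Finset.mem_union_left _ h''))
                  apply Finset.disjoint_of_subset_left hbig
                  rw [Finset.disjoint_union_left, Finset.disjoint_union_left]
                  refine ⟨⟨Finset.disjoint_union_left.mpr ⟨hDRdisj.1, hDRdisj2.1⟩, ?_⟩, ?_⟩
                  · exact Finset.disjoint_of_subset_left
                      (mem_cycleFactorsFinset_support_le hγmem) hR
                  · simp only [Finset.disjoint_singleton_left]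
                    exact fun hc => Finset.disjoint_left.mp hR hyσ hc
      · -- s ≥ 1
        by_cases hl₂2 : l₂ = 2
        · -- c = 1, s = 1, l₁ = m + 1
          have hcc1 : c = 1 := by omega
          have hs1 : s = 1 := by omega
          have hl₁ : l₁ = m + 1 := by omega
          obtain ⟨γ, hγ⟩ := Finset.card_eq_one.mp (hc ▸ hcc1 : σ.cycleFactorsFinset.card = 1)
          have hσc : σ.IsCycle := (cycleFactorsFinset_eq_singleton_iff.mp hγ).1
          have hroom2 : l₁ + R.card ≤ Fintype.card α := by
            rcases hroom with h | h
            · omega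
            · exact h
          have hfresh : ((σ.support ∪ R)ᶜ).Nonempty := by
            rw [← Finset.card_pos, Finset.card_compl]
            have := Finset.card_union_le σ.support R
            omega
          obtain ⟨x, hx⟩ := hfresh
          rw [Finset.mem_compl, Finset.mem_union, not_or] at hx
          obtain ⟨z, hz⟩ := Finset.card_pos.mp (show 0 < σ.support.card by omega)
          obtain ⟨hC₁c, hC₁s⟩ := cycle_mul_swap hσc hz hx.1
          have hxz : x ≠ z := fun h => hx.1 (h ▸ hz)
          refine ⟨σ * Equiv.swap x z, Equiv.swap x z, hC₁c, ?_, isCycle_swap hxz, ?_, ?_, ?_⟩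
          · rw [hC₁s, Finset.card_insert_of_notMem hx.1]; omega
          · rw [Equiv.Perm.support_swap hxz,
              Finset.card_insert_of_notMem (by simp [hxz]), Finset.card_singleton]
            omega
          · rw [mul_assoc, Equiv.swap_mul_self, mul_one]
          · rw [hC₁s, Equiv.Perm.support_swap hxz]
            rw [Finset.disjoint_left]
            intro w hw
            simp only [Finset.mem_union, Finset.mem_insert, Finset.mem_singleton] at hw
            rcases hw with (rfl | h) | (rfl | rfl)
            · exact hx.2
            · exact fun hc => Finset.disjoint_left.mp hR h hc
            · exact hx.2
            · exact fun hc => Finset.disjoint_left.mp hR hz hc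
        · -- s-step
          have hl₂3 : 3 ≤ l₂ := by omega
          obtain ⟨D₁, D₂, hD₁c, hD₁card, hD₂c, hD₂card, hσD, hDR⟩ :=
            ih σ (l₁ - 1) (l₂ - 1) (s - 1) R (by omega) (by omega) (by omega)
              (by omega) (by omega) hR (by rcases hroom with h | h; · left; omega
                                           · right; omega)
          have hDR₁ : Disjoint D₁.support R := (Finset.disjoint_union_left.mp hDR).1
          have hDR₂ : Disjoint D₂.support R := (Finset.disjoint_union_left.mp hDR).2
          by_cases hAB : (D₁.support \ D₂.support).Nonempty ∧
              (D₂.support \ D₁.support).Nonempty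
          · obtain ⟨⟨z, hz⟩, ⟨x, hx⟩⟩ := hAB
            rw [Finset.mem_sdiff] at hz hx
            obtain ⟨hC₁c, hC₁s⟩ := cycle_mul_swap hD₁c hz.1 hx.2
            obtain ⟨hC₂c, hC₂s⟩ := swap_mul_cycle hD₂c hx.1 hz.2
            refine ⟨D₁ * Equiv.swap x z, Equiv.swap z x * D₂, hC₁c, ?_, hC₂c, ?_, ?_, ?_⟩
            · rw [hC₁s, Finset.card_insert_of_notMem hx.2, hD₁card]; omega
            · rw [hC₂s, Finset.card_insert_of_notMem hz.2, hD₂card]; omega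
            · rw [show Equiv.swap z x = Equiv.swap x z from Equiv.swap_comm z x]
              rw [show D₁ * Equiv.swap x z * (Equiv.swap x z * D₂) =
                D₁ * (Equiv.swap x z * Equiv.swap x z) * D₂ from by group]
              rw [Equiv.swap_mul_self, mul_one, hσD]
            · rw [hC₁s, hC₂s, Finset.disjoint_left]
              intro w hw
              simp only [Finset.mem_union, Finset.mem_insert] at hw
              rcases hw with (rfl | h) | (rfl | h)
              · exact fun hc => Finset.disjoint_left.mp hDR₂ hx.1 hc
              · exact fun hc => Finset.disjoint_left.mp hDR₁ h hc
              · exact fun hc => Finset.disjoint_left.mp hDR₁ hz.1 hc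
              · exact fun hc => Finset.disjoint_left.mp hDR₂ h hc
          · -- containment case
            have hunion : (D₁.support ∪ D₂.support).card ≤ l₁ - 1 := by
              rw [not_and_or] at hAB
              rcases hAB with h | h
              · rw [Finset.not_nonempty_iff_eq_empty, Finset.sdiff_eq_empty_iff_subset] at h
                rw [Finset.union_eq_right.mpr h, hD₂card]
                omega
              · rw [Finset.not_nonempty_iff_eq_empty, Finset.sdiff_eq_empty_iff_subset] at h
                rw [Finset.union_eq_left.mpr h, hD₁card]
            have hover : (D₁.support ∩ D₂.support).Nonempty := by
              rw [not_and_or] at hAB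
              rcases hAB with h | h
              · rw [Finset.not_nonempty_iff_eq_empty, Finset.sdiff_eq_empty_iff_subset] at h
                obtain ⟨z, hz⟩ := Finset.card_pos.mp
                  (lt_of_lt_of_le (by norm_num) hD₁c.two_le_card_support)
                exact ⟨z, Finset.mem_inter.mpr ⟨hz, h hz⟩⟩
              · rw [Finset.not_nonempty_iff_eq_empty, Finset.sdiff_eq_empty_iff_subset] at h
                obtain ⟨z, hz⟩ := Finset.card_pos.mp
                  (lt_of_lt_of_le (by norm_num) hD₂c.two_le_card_support)
                exact ⟨z, Finset.mem_inter.mpr ⟨h hz, hz⟩⟩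
            have hml₁ : m < l₁ := by
              by_contra hcon
              push_neg at hcon
              have hsupsub : σ.support ⊆ D₁.support ∪ D₂.support := by
                rw [hσD]; exact support_mul_le D₁ D₂
              have := Finset.card_le_card hsupsub
              omega
            have hroom2 : l₁ + R.card ≤ Fintype.card α := by
              rcases hroom with h | h
              · omega
              · exact h
            have hfresh : ((D₁.support ∪ D₂.support ∪ R)ᶜ).Nonempty := by
              rw [← Finset.card_pos, Finset.card_compl]
              have h1 := Finset.card_union_le (D₁.support ∪ D₂.support) R
              omega
            obtain ⟨x, hx⟩ := hfresh
            rw [Finset.mem_compl, Finset.mem_union, Finset.mem_union, not_or, not_or] at hx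
            obtain ⟨⟨hxA, hxB⟩, hxR⟩ := hx
            obtain ⟨z, hzmem⟩ := hover
            rw [Finset.mem_inter] at hzmem
            obtain ⟨hC₁c, hC₁s⟩ := cycle_mul_swap hD₁c hzmem.1 hxA
            obtain ⟨hC₂c, hC₂s⟩ := swap_mul_cycle hD₂c hzmem.2 hxB
            refine ⟨D₁ * Equiv.swap x z, Equiv.swap x z * D₂, hC₁c, ?_, hC₂c, ?_, ?_, ?_⟩
            · rw [hC₁s, Finset.card_insert_of_notMem hxA, hD₁card]; omega
            · rw [hC₂s, Finset.card_insert_of_notMem hxB, hD₂card]; omega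
            · rw [show D₁ * Equiv.swap x z * (Equiv.swap x z * D₂) =
                D₁ * (Equiv.swap x z * Equiv.swap x z) * D₂ from by group]
              rw [Equiv.swap_mul_self, mul_one, hσD]
            · rw [hC₁s, hC₂s, Finset.disjoint_left]
              intro w hw
              simp only [Finset.mem_union, Finset.mem_insert] at hw
              rcases hw with (rfl | h) | (rfl | h)
              · exact hxR
              · exact fun hc => Finset.disjoint_left.mp hDR₁ h hc
              · exact hxR
              · exact fun hc => Finset.disjoint_left.mp hDR₂ h hc


theorem two_mul_card_factors_le' (σ : Equiv.Perm α) :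
    2 * σ.cycleFactorsFinset.card ≤ σ.support.card := by
  have h2 : ∀ x ∈ σ.cycleType, 2 ≤ x := fun x hx => two_le_of_mem_cycleType hx
  have hsum' := Equiv.Perm.sum_cycleType σ
  have hcard : Multiset.card σ.cycleType = σ.cycleFactorsFinset.card :=
    (card_factors_eq σ).symm
  calc 2 * σ.cycleFactorsFinset.card = Multiset.card σ.cycleType • 2 := by
        rw [hcard, smul_eq_mul, Nat.mul_comm]
  _ ≤ σ.cycleType.sum := Multiset.card_nsmul_le_sum h2
  _ = σ.support.card := hsum'

end BWs

theorem product_of_two_cycles_iff (n l₁ l₂ : ℕ) (σ : Equiv.Perm (Fin n))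
    (h1 : l₁ ≤ n) (h2 : l₂ ≤ l₁) (h3 : 2 ≤ l₂) :
    (∃ C₁ C₂ : Equiv.Perm (Fin n),
        C₁.IsCycle ∧ C₁.support.card = l₁ ∧ C₂.IsCycle ∧ C₂.support.card = l₂ ∧
        σ = C₁ * C₂) ↔
      (σ.cycleFactorsFinset.card = 2 ∧
        (∃ c₁ ∈ σ.cycleFactorsFinset, ∃ c₂ ∈ σ.cycleFactorsFinset,
          c₁ ≠ c₂ ∧ c₁.support.card = l₁ ∧ c₂.support.card = l₂) ∧
        l₁ + l₂ = σ.support.card) ∨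
      ((∃ s : ℕ, l₁ + l₂ = σ.support.card + σ.cycleFactorsFinset.card + 2 * s) ∧
        l₁ - l₂ ≤ σ.support.card - σ.cycleFactorsFinset.card) := by
  constructor
  · rintro ⟨C₁, C₂, hC₁c, hl₁, hC₂c, hl₂, hσ⟩
    by_cases hd : Disjoint C₁.support C₂.support
    · left
      obtain ⟨hfac, hne⟩ := factors_pair hC₁c hC₂c hd
      rw [← hσ] at hfac
      have hdp : Equiv.Perm.Disjoint C₁ C₂ := disjoint_iff_disjoint_support.mpr hd
      refine ⟨?_, ⟨C₁, ?_, C₂, ?_, hne, hl₁, hl₂⟩, ?_⟩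
      · rw [hfac, Finset.card_pair hne]
      · rw [hfac]; simp
      · rw [hfac]; simp
      · rw [hσ, hdp.support_mul, Finset.card_union_of_disjoint hd, hl₁, hl₂]
    · right
      have hov : (C₁.support ∩ C₂.support).Nonempty :=
        Finset.not_disjoint_iff_nonempty_inter.mp hd
      obtain ⟨hcount1, hcount2⟩ := forward_counting hσ hC₁c hC₂c hov
      have hpar := sign_parity hσ hC₁c hC₂c
      rw [hl₁, hl₂] at hcount1 hcount2 hpar
      have hmc := two_mul_card_factors_le' σ
      refine ⟨⟨(l₁ + l₂ - (σ.support.card + σ.cycleFactorsFinset.card)) / 2, by omega⟩,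
        by omega⟩
  · rintro (⟨hcard2, ⟨c₁, hc₁, c₂, hc₂, hne, hl₁, hl₂⟩, hsum⟩ | ⟨⟨s, hsum⟩, hdiff⟩)
    · have hsubset : ({c₁, c₂} : Finset (Equiv.Perm (Fin n))) ⊆ σ.cycleFactorsFinset := by
        intro g hg
        simp only [Finset.mem_insert, Finset.mem_singleton] at hg
        rcases hg with rfl | rfl
        · exact hc₁
        · exact hc₂
      have hfac : σ.cycleFactorsFinset = {c₁, c₂} :=
        (Finset.eq_of_subset_of_card_le hsubset (by rw [hcard2, Finset.card_pair hne])).symm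
      exact ⟨c₁, c₂, (mem_cycleFactorsFinset_iff.mp hc₁).1, hl₁,
        (mem_cycleFactorsFinset_iff.mp hc₂).1, hl₂, prod_of_factors_pair hne hfac⟩
    · have hmc := two_mul_card_factors_le' σ
      obtain ⟨C₁, C₂, hC₁c, hl₁, hC₂c, hl₂, hσ, -⟩ :=
        BW (l₁ + l₂) σ l₁ l₂ s ∅ (le_refl _) h3 h2 hsum (by omega)
          (Finset.disjoint_empty_right _)
          (by right; rw [Finset.card_empty, Fintype.card_fin]; omega)
      exact ⟨C₁, C₂, hC₁c, hl₁, hC₂c, hl₂, hσ⟩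


end ProductOfTwoCyclesHelpers
end

section
/- Let l, t be natural numbers with l ≥ 2 and t ≥ 1, and let σ ∈ S_n be a cycle of length l + (t−1)(l−1). Then σ can be written as a product of t many l-cycles of S_n. -/
open Equiv

private lemma formPerm_concat' {α : Type*} [DecidableEq α] (L : List α) (hL : L ≠ []) (b : α) :
    (L ++ [b]).formPerm = L.formPerm * Equiv.swap (L.getLast hL) b := by
  obtain ⟨M, c, rfl⟩ := (List.eq_nil_or_concat L).resolve_left hL
  simp only [List.concat_eq_append, List.getLast_append_singleton]
  rw [List.append_assoc]
  simpa using List.formPerm_append_pair M c b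

private lemma formPerm_append_cons {α : Type*} [DecidableEq α] (xs : List α) (a : α)
    (ys : List α) :
    (xs ++ a :: ys).formPerm = (xs ++ [a]).formPerm * (a :: ys).formPerm := by
  induction ys using List.reverseRecOn with
  | nil => simp [List.formPerm_singleton]
  | append_singleton ys b ih =>
      have h1 : xs ++ a :: (ys ++ [b]) = (xs ++ a :: ys) ++ [b] := by simp
      have h2 : a :: (ys ++ [b]) = (a :: ys) ++ [b] := by simp
      rw [h1, h2, formPerm_concat' _ (by simp) b, formPerm_concat' _ (by simp) b, ih, mul_assoc]
      congr 2
      rw [List.getLast_append_of_ne_nil _ (by simp)]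

theorem cycle_as_product_of_cycles (n l t : ℕ) (hl : 2 ≤ l) (ht : 1 ≤ t)
    (σ : Equiv.Perm (Fin n)) (hσ : σ.IsCycle)
    (hlen : σ.support.card = l + (t - 1) * (l - 1)) :
    IsProdOfCycles n t l σ := by
  induction t, ht using Nat.le_induction generalizing σ with
  | base =>
      refine ⟨fun _ => σ, fun i => ⟨hσ, by simpa using hlen⟩, ?_⟩
      simp
  | succ t ht IH =>
      -- σ has support of size l + t * (l - 1)
      have hlen' : σ.support.card = l + t * (l - 1) := by simpa using hlen
      obtain ⟨x, hx⟩ : σ.support.Nonempty := by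
        rw [← Finset.card_pos, hlen']; omega
      set L : List (Fin n) := σ.toList x with hLdef
      have hnd : L.Nodup := Equiv.Perm.nodup_toList σ x
      have hform : L.formPerm = σ := by
        rw [hLdef, Equiv.Perm.formPerm_toList, Equiv.Perm.IsCycle.cycleOf_eq hσ
          (Equiv.Perm.mem_support.mp hx)]
      have hLlen : L.length = l + t * (l - 1) := by
        rw [hLdef, Equiv.Perm.length_toList, Equiv.Perm.IsCycle.cycleOf_eq hσ
          (Equiv.Perm.mem_support.mp hx), hlen']
      have hl1 : l - 1 < L.length := by rw [hLlen]; omega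
      set a : Fin n := L[l - 1] with ha
      have hdrop : L.drop (l - 1) = a :: L.drop l := by
        rw [List.drop_eq_getElem_cons hl1]
        have h11 : l - 1 + 1 = l := by omega
        rw [h11]
      have hsplit : L = L.take (l - 1) ++ a :: L.drop l := by
        conv_lhs => rw [← List.take_append_drop (l - 1) L]
        rw [hdrop]
      have hA : L.take (l - 1) ++ [a] = L.take l := by
        have : l = (l - 1) + 1 := by omega
        rw [this, List.take_succ, List.getElem?_eq_getElem hl1]
        rfl
      have hσeq : σ = (L.take l).formPerm * (a :: L.drop l).formPerm := by
        rw [← hA, ← formPerm_append_cons, ← hsplit, hform]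
      -- lengths
      have hAlen : (L.take l).length = l := by
        rw [List.length_take, hLlen]
        omega
      have hBlen : (a :: L.drop l).length = l + (t - 1) * (l - 1) := by
        obtain ⟨s, rfl⟩ : ∃ s, t = s + 1 := ⟨t - 1, by omega⟩
        have hm : (s + 1) * (l - 1) = s * (l - 1) + (l - 1) := by ring
        have hm2 : (s + 1 - 1) * (l - 1) = s * (l - 1) := by simp
        simp only [List.length_cons, List.length_drop, hLlen]
        omega
      -- nodup of the pieces
      have hndA : (L.take l).Nodup := hnd.sublist (List.take_sublist _ _)
      have hndB : (a :: L.drop l).Nodup := by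
        rw [← hdrop]
        exact hnd.sublist (List.drop_sublist _ _)
      -- the first factor is an l-cycle
      have hcycA : (L.take l).formPerm.IsCycle :=
        List.isCycle_formPerm hndA (by omega)
      have hsuppA : (L.take l).formPerm.support.card = l := by
        rw [List.support_formPerm_of_nodup _ hndA (fun y hy => by
          rw [hy] at hAlen; simp at hAlen; omega)]
        rw [List.toFinset_card_of_nodup hndA, hAlen]
      -- the second factor is a cycle of length l + (t-1)*(l-1)
      have hcycB : (a :: L.drop l).formPerm.IsCycle :=
        List.isCycle_formPerm hndB (by omega)
      have hsuppB : (a :: L.drop l).formPerm.support.card = l + (t - 1) * (l - 1) := by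
        rw [List.support_formPerm_of_nodup _ hndB (fun y hy => by
          rw [hy] at hBlen; simp at hBlen; omega)]
        rw [List.toFinset_card_of_nodup hndB, hBlen]
      obtain ⟨c', hc', hprod⟩ := IH (a :: L.drop l).formPerm hcycB hsuppB
      refine ⟨Fin.cons (L.take l).formPerm c', ?_, ?_⟩
      · intro i
        refine Fin.cases ?_ ?_ i
        · exact ⟨hcycA, hsuppA⟩
        · intro j
          simpa using hc' j
      · rw [List.ofFn_succ]
        simp only [Fin.cons_zero, Fin.cons_succ, List.prod_cons]
        rw [← hprod, ← hσeq]
end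

section
/- Let k, l ≥ 2 and n ≥ 4 be natural numbers. If k is even and 2 ≤ l ≤ n−1, then every element of A_n that is a product of k many l-cycles of S_n is also a product of k many (l+1)-cycles of S_n. If k is odd and 2 ≤ l ≤ n−2, then every element of A_n that is a product of k many l-cycles of S_n is also a product of k many (l+2)-cycles of S_n. -/
open Equiv

section aux

open Equiv.Perm


variable {α : Type*} [Fintype α] [DecidableEq α]

lemma extend_cycle {c : Equiv.Perm α} {a b : α}
    (hc : c.IsCycle) (ha : a ∈ c.support) (hb : b ∉ c.support) :
    (c * Equiv.swap a b).IsCycle ∧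
      (c * Equiv.swap a b).support.card = c.support.card + 1 := by
  have hx : c a ∈ c.support := by rwa [Equiv.Perm.apply_mem_support]
  have hcyc : c.cycleOf (c a) = c := hc.cycleOf_eq (Equiv.Perm.mem_support.mp hx)
  have hform : (c.toList (c a)).formPerm = c := by
    rw [Equiv.Perm.formPerm_toList, hcyc]
  have hlen : (c.toList (c a)).length = c.support.card := by
    rw [Equiv.Perm.length_toList, hcyc]
  have h2 : 2 ≤ c.support.card := hc.two_le_card_support
  have hLne : c.toList (c a) ≠ [] := by
    intro h; rw [h] at hlen; simp at hlen; omega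
  have hpos : 0 < (c.toList (c a)).length := List.length_pos_iff.mpr hLne
  have hlast : (c.toList (c a)).getLast hLne = a := by
    have h1 : (c.toList (c a)).getLast hLne
        = (c.toList (c a)).get ⟨(c.toList (c a)).length - 1, by omega⟩ :=
      List.getLast_eq_getElem _
    rw [h1, List.get_eq_getElem, Equiv.Perm.getElem_toList]
    have h3 : (c ^ ((c.toList (c a)).length - 1)) (c a)
        = (c ^ (c.toList (c a)).length) a := by
      conv_rhs => rw [show (c.toList (c a)).length = (c.toList (c a)).length - 1 + 1 by omega]
      rw [pow_succ, Equiv.Perm.mul_apply]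
    rw [h3, hlen, ← hc.orderOf, pow_orderOf_eq_one, Equiv.Perm.one_apply]
  have hbL : b ∉ c.toList (c a) := by
    intro h
    rw [Equiv.Perm.mem_toList_iff] at h
    obtain ⟨⟨i, hi⟩, hxs⟩ := h
    exact hb (hi ▸ Equiv.Perm.zpow_apply_mem_support.mpr hxs)
  have hnd : (c.toList (c a) ++ [b]).Nodup := by
    simp [List.nodup_append, Equiv.Perm.nodup_toList, hbL]
    exact fun x hx h => hbL (h ▸ hx)
  have hlen2 : (c.toList (c a) ++ [b]).length = c.support.card + 1 := by
    simp [hlen]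
  have key : c * Equiv.swap a b = (c.toList (c a) ++ [b]).formPerm := by
    conv_lhs => rw [← hform, ← List.dropLast_append_getLast hLne, hlast]
    conv_rhs => rw [← List.dropLast_append_getLast hLne, hlast, List.append_assoc]
    simp only [List.singleton_append]
    rw [List.formPerm_append_pair]
  constructor
  · rw [key]
    exact List.isCycle_formPerm hnd (by omega)
  · rw [key, List.support_formPerm_of_nodup _ hnd, List.card_toFinset,
      hnd.dedup, hlen2]
    intro y hy
    have h4 := congrArg List.length hy
    rw [hlen2] at h4
    simp at h4
    exact hc.ne_one h4


variable {α : Type*} [Fintype α] [DecidableEq α]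


lemma extend_cycle_left {c : Equiv.Perm α} {a b : α}
    (hc : c.IsCycle) (ha : a ∈ c.support) (hb : b ∉ c.support) :
    (Equiv.swap a b * c).IsCycle ∧
      (Equiv.swap a b * c).support.card = c.support.card + 1 := by
  have hi : a ∈ c⁻¹.support := by rwa [Equiv.Perm.support_inv]
  have hbi : b ∉ c⁻¹.support := by rwa [Equiv.Perm.support_inv]
  obtain ⟨h1, h2⟩ := extend_cycle hc.inv hi hbi
  have he : Equiv.swap a b * c = (c⁻¹ * Equiv.swap a b)⁻¹ := by
    rw [mul_inv_rev, inv_inv, Equiv.swap_inv]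
  rw [he]
  refine ⟨h1.inv, ?_⟩
  rw [Equiv.Perm.support_inv, h2, Equiv.Perm.support_inv]

lemma pair_lemma {c₁ c₂ : Equiv.Perm α} (h₁ : c₁.IsCycle) (h₂ : c₂.IsCycle)
    (k₁ : c₁.support.card < Fintype.card α) (k₂ : c₂.support.card < Fintype.card α) :
    ∃ d₁ d₂ : Equiv.Perm α, d₁.IsCycle ∧ d₁.support.card = c₁.support.card + 1 ∧
      d₂.IsCycle ∧ d₂.support.card = c₂.support.card + 1 ∧ d₁ * d₂ = c₁ * c₂ := by
  have hex : ∃ x y : α, (x ∈ c₁.support ∧ y ∉ c₁.support) ∧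
      ((x ∈ c₂.support ∧ y ∉ c₂.support) ∨ (y ∈ c₂.support ∧ x ∉ c₂.support)) := by
    by_cases hA : (c₁.support \ c₂.support).Nonempty ∧ (c₂.support \ c₁.support).Nonempty
    · obtain ⟨⟨x, hx1⟩, ⟨y, hy1⟩⟩ := hA
      rw [Finset.mem_sdiff] at hx1 hy1
      exact ⟨x, y, ⟨hx1.1, hy1.2⟩, Or.inr ⟨hy1.1, hx1.2⟩⟩
    · have hcont : c₁.support ⊆ c₂.support ∨ c₂.support ⊆ c₁.support := by
        rw [not_and_or] at hA
        rcases hA with h | h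
        · left
          rw [Finset.not_nonempty_iff_eq_empty, Finset.sdiff_eq_empty_iff_subset] at h
          exact h
        · right
          rw [Finset.not_nonempty_iff_eq_empty, Finset.sdiff_eq_empty_iff_subset] at h
          exact h
      have hu : (c₁.support ∪ c₂.support).card < Fintype.card α := by
        rcases hcont with h | h
        · rw [Finset.union_eq_right.mpr h]; exact k₂
        · rw [Finset.union_eq_left.mpr h]; exact k₁
      have hcompl : ((c₁.support ∪ c₂.support)ᶜ).Nonempty := by
        rw [← Finset.card_pos, Finset.card_compl]
        omega
      obtain ⟨y, hy⟩ := hcompl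
      rw [Finset.mem_compl, Finset.mem_union, not_or] at hy
      have hs1 : c₁.support.Nonempty :=
        Finset.card_pos.mp (by have := h₁.two_le_card_support; omega)
      have hs2 : c₂.support.Nonempty :=
        Finset.card_pos.mp (by have := h₂.two_le_card_support; omega)
      have hint : (c₁.support ∩ c₂.support).Nonempty := by
        rcases hcont with h | h
        · rwa [Finset.inter_eq_left.mpr h]
        · rwa [Finset.inter_eq_right.mpr h]
      obtain ⟨x, hx⟩ := hint
      rw [Finset.mem_inter] at hx
      exact ⟨x, y, ⟨hx.1, hy.1⟩, Or.inl ⟨hx.2, hy.2⟩⟩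
  obtain ⟨x, y, ⟨hx1, hy1⟩, hor⟩ := hex
  obtain ⟨hd1, hd1c⟩ := extend_cycle h₁ hx1 hy1
  have hd2 : (Equiv.swap x y * c₂).IsCycle ∧
      (Equiv.swap x y * c₂).support.card = c₂.support.card + 1 := by
    rcases hor with ⟨hx2, hy2⟩ | ⟨hy2, hx2⟩
    · exact extend_cycle_left h₂ hx2 hy2
    · rw [Equiv.swap_comm]
      exact extend_cycle_left h₂ hy2 hx2
  refine ⟨c₁ * Equiv.swap x y, Equiv.swap x y * c₂, hd1, hd1c, hd2.1, hd2.2, ?_⟩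
  rw [mul_assoc, ← mul_assoc (Equiv.swap x y), Equiv.swap_mul_self, one_mul]

lemma triple_lemma {l : ℕ} {c₁ c₂ c₃ : Equiv.Perm α}
    (h₁ : c₁.IsCycle) (h₂ : c₂.IsCycle) (h₃ : c₃.IsCycle)
    (e₁ : c₁.support.card = l) (e₂ : c₂.support.card = l) (e₃ : c₃.support.card = l)
    (hl : l + 2 ≤ Fintype.card α) :
    ∃ d₁ d₂ d₃ : Equiv.Perm α, d₁.IsCycle ∧ d₁.support.card = l + 2 ∧
      d₂.IsCycle ∧ d₂.support.card = l + 2 ∧ d₃.IsCycle ∧ d₃.support.card = l + 2 ∧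
      d₁ * d₂ * d₃ = c₁ * c₂ * c₃ := by
  obtain ⟨d₂, d₃, hd₂, hc₂, hd₃, hc₃, hp⟩ := pair_lemma h₂ h₃ (by omega) (by omega)
  obtain ⟨f₁, f₂, hf₁, hfc₁, hf₂, hfc₂, hp2⟩ := pair_lemma h₁ hd₂ (by omega) (by omega)
  obtain ⟨g₁, g₂, hg₁, hgc₁, hg₂, hgc₂, hp3⟩ := pair_lemma hf₁ hd₃ (by omega) (by omega)
  refine ⟨f₁ * f₂ * f₁⁻¹, g₁, g₂, hf₂.conj, ?_, hg₁, by omega, hg₂, by omega, ?_⟩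
  · rw [Equiv.Perm.card_support_conj]; omega
  · have key : f₁ * f₂ * f₁⁻¹ * g₁ * g₂ = (f₁ * f₂) * (f₁⁻¹ * (g₁ * g₂)) := by group
    rw [key, hp3, hp2]
    have key2 : f₁⁻¹ * (f₁ * d₃) = d₃ := by group
    rw [key2, mul_assoc, hp, mul_assoc]

lemma even_chain {l : ℕ} (hl : l + 1 ≤ Fintype.card α) :
    ∀ (m : ℕ) (L : List (Equiv.Perm α)), L.length = 2 * m →
      (∀ c ∈ L, c.IsCycle ∧ c.support.card = l) →
      ∃ M : List (Equiv.Perm α), M.length = L.length ∧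
        (∀ c ∈ M, c.IsCycle ∧ c.support.card = l + 1) ∧ M.prod = L.prod := by
  intro m
  induction m with
  | zero =>
    intro L hL _
    rw [Nat.mul_zero, List.length_eq_zero_iff] at hL
    subst hL
    exact ⟨[], rfl, by simp, rfl⟩
  | succ m ih =>
    intro L hL hmem
    match L with
    | [] => simp at hL
    | [c] => simp at hL; omega
    | c₁ :: c₂ :: rest =>
      obtain ⟨hc₁, he₁⟩ := hmem c₁ (by simp)
      obtain ⟨hc₂, he₂⟩ := hmem c₂ (by simp)
      obtain ⟨d₁, d₂, hd₁, hdc₁, hd₂, hdc₂, hp⟩ :=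
        pair_lemma hc₁ hc₂ (by omega) (by omega)
      have hrl : rest.length = 2 * m := by simp at hL; omega
      obtain ⟨M, hMl, hMm, hMp⟩ := ih rest hrl (fun c hc => hmem c (by simp [hc]))
      refine ⟨d₁ :: d₂ :: M, by simp [hMl], ?_, ?_⟩
      · intro c hc
        simp only [List.mem_cons] at hc
        rcases hc with rfl | rfl | hc
        · exact ⟨hd₁, by omega⟩
        · exact ⟨hd₂, by omega⟩
        · exact hMm c hc
      · simp only [List.prod_cons]
        rw [← mul_assoc, hp, hMp, mul_assoc]

lemma odd_chain {l : ℕ} (hl : l + 2 ≤ Fintype.card α) :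
    ∀ (m : ℕ) (L : List (Equiv.Perm α)), L.length = 2 * m + 3 →
      (∀ c ∈ L, c.IsCycle ∧ c.support.card = l) →
      ∃ M : List (Equiv.Perm α), M.length = L.length ∧
        (∀ c ∈ M, c.IsCycle ∧ c.support.card = l + 2) ∧ M.prod = L.prod := by
  intro m L hL hmem
  match L with
  | [] => simp at hL
  | [c] => simp at hL
  | [c, c'] => simp at hL
  | c₁ :: c₂ :: c₃ :: rest =>
    obtain ⟨hc₁, he₁⟩ := hmem c₁ (by simp)
    obtain ⟨hc₂, he₂⟩ := hmem c₂ (by simp)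
    obtain ⟨hc₃, he₃⟩ := hmem c₃ (by simp)
    obtain ⟨d₁, d₂, d₃, hd₁, hdc₁, hd₂, hdc₂, hd₃, hdc₃, hp⟩ :=
      triple_lemma hc₁ hc₂ hc₃ he₁ he₂ he₃ hl
    have hrl : rest.length = 2 * m := by simp at hL; omega
    obtain ⟨M₁, hM₁l, hM₁m, hM₁p⟩ :=
      even_chain (by omega) m rest hrl (fun c hc => hmem c (by simp [hc]))
    obtain ⟨M₂, hM₂l, hM₂m, hM₂p⟩ :=
      even_chain (l := l + 1) (by omega) m M₁ (by omega) hM₁m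
    refine ⟨d₁ :: d₂ :: d₃ :: M₂, by simp; omega, ?_, ?_⟩
    · intro c hc
      simp only [List.mem_cons] at hc
      rcases hc with rfl | rfl | rfl | hc
      · exact ⟨hd₁, hdc₁⟩
      · exact ⟨hd₂, hdc₂⟩
      · exact ⟨hd₃, hdc₃⟩
      · exact hM₂m c hc
    · simp only [List.prod_cons]
      rw [hM₂p, hM₁p, ← mul_assoc, ← mul_assoc, hp, mul_assoc, mul_assoc]

end aux

theorem lengthening_of_cycles (k l n : ℕ) (hk : 2 ≤ k) (hl : 2 ≤ l) (hn : 4 ≤ n) :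
    (Even k → l ≤ n - 1 →
      ∀ σ ∈ alternatingGroup (Fin n),
        IsProdOfCycles n k l σ → IsProdOfCycles n k (l + 1) σ) ∧
    (Odd k → l ≤ n - 2 →
      ∀ σ ∈ alternatingGroup (Fin n),
        IsProdOfCycles n k l σ → IsProdOfCycles n k (l + 2) σ) := by
  have hcard : Fintype.card (Fin n) = n := Fintype.card_fin n
  constructor
  · intro hke hln σ _ hprod
    obtain ⟨c, hc, hσ⟩ := hprod
    obtain ⟨m, hm⟩ : ∃ m, k = 2 * m := by
      obtain ⟨r, hr⟩ := hke; exact ⟨r, by omega⟩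
    obtain ⟨M, hMl, hMm, hMp⟩ := even_chain (l := l) (by omega) m (List.ofFn c)
      (by simp [hm])
      (by
        intro x hx
        obtain ⟨i, rfl⟩ := Set.mem_range.mp ((List.mem_ofFn' _ _).mp hx)
        exact hc i)
    have hMk : M.length = k := by rw [hMl, List.length_ofFn]
    subst hMk
    exact ⟨M.get, fun i => hMm _ (M.get_mem _),
      by rw [List.ofFn_get, hσ]; exact hMp.symm⟩
  · intro hko hln σ _ hprod
    obtain ⟨c, hc, hσ⟩ := hprod
    obtain ⟨m, hm⟩ : ∃ m, k = 2 * m + 3 := by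
      obtain ⟨r, hr⟩ := hko; exact ⟨r - 1, by omega⟩
    obtain ⟨M, hMl, hMm, hMp⟩ := odd_chain (l := l) (by omega) m (List.ofFn c)
      (by simp [hm])
      (by
        intro x hx
        obtain ⟨i, rfl⟩ := Set.mem_range.mp ((List.mem_ofFn' _ _).mp hx)
        exact hc i)
    have hMk : M.length = k := by rw [hMl, List.length_ofFn]
    subst hMk
    exact ⟨M.get, fun i => hMm _ (M.get_mem _),
      by rw [List.ofFn_get, hσ]; exact hMp.symm⟩
end

section
/- Let n be an even integer and let σ ∈ S_n satisfy 3·n_σ > n + 1. Then for each even integer m with 2 ≤ m ≤ n − 2, there exist non-trivial permutations ρ and φ in S_n with disjoint supports such that σ = ρφ, |supp(ρ)| ≤ m, and |supp(φ)| ≤ n − m. -/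
open Equiv

section CombLemmas
open Finset


variable {ι : Type*} [DecidableEq ι]

lemma exact_even_subset_sum :
    ∀ (c : ℕ) (F : Finset ι) (f : ι → ℕ), F.card ≤ c →
      (∀ x ∈ F, 2 ≤ f x) →
      2 ≤ (F.filter (fun x => f x = 2)).card →
      (∑ x ∈ F, f x) + 1 ≤ 3 * F.card →
      Even (∑ x ∈ F, f x) →
      ∀ t : ℕ, Even t → 2 ≤ t → t + 2 ≤ ∑ x ∈ F, f x →
      ∃ S ⊆ F, ∑ x ∈ S, f x = t := by
  intro c
  induction c with
  | zero =>
    intro F f hc _ htwos _ _ t _ _ _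
    exact absurd (le_trans htwos (le_trans (card_le_card (filter_subset _ F)) hc))
      (by norm_num)
  | succ c ih =>
    intro F f hc h2 htwos hs3 hseven t hteven ht2 hts
    by_cases hall : ∀ x ∈ F, f x = 2
    · -- all weights are 2
      have hs : ∑ x ∈ F, f x = 2 * F.card := by
        rw [Finset.sum_congr rfl hall]
        simp [mul_comm]
      obtain ⟨k, hk⟩ := hteven
      have hkc : k ≤ F.card := by omega
      obtain ⟨S, hSF, hScard⟩ := Finset.exists_subset_card_eq hkc
      refine ⟨S, hSF, ?_⟩
      have : ∑ x ∈ S, f x = 2 * S.card := by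
        rw [Finset.sum_congr rfl (fun x hx => hall x (hSF hx))]
        simp [mul_comm]
      omega
    · push_neg at hall
      by_cases hex : ∃ x ∈ F, 4 ≤ f x ∧ Even (f x)
      · -- remove one even element of weight ≥ 4
        obtain ⟨x, hxF, hx4, hxeven⟩ := hex
        set F' := F.erase x with hF'
        have hsum : (∑ y ∈ F', f y) + f x = ∑ y ∈ F, f y :=
          Finset.sum_erase_add F f hxF
        have hcard : F'.card + 1 = F.card := Finset.card_erase_add_one hxF
        have h2' : ∀ y ∈ F', 2 ≤ f y := fun y hy => h2 y (Finset.mem_of_mem_erase hy)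
        have hlow : 2 * F'.card ≤ ∑ y ∈ F', f y := by
          calc 2 * F'.card = F'.card * 2 := mul_comm _ _
          _ ≤ ∑ y ∈ F', f y := Finset.card_nsmul_le_sum F' f 2 h2'
        have htwos' : 2 ≤ (F'.filter (fun y => f y = 2)).card := by
          refine le_trans htwos (card_le_card ?_)
          intro y hy
          rw [mem_filter] at hy ⊢
          exact ⟨Finset.mem_erase.mpr ⟨fun h => by rw [h] at hy; omega, hy.1⟩, hy.2⟩
      -- key inequalities
        have hcard' : F'.card ≤ c := by omega
        have hs3' : (∑ y ∈ F', f y) + 1 ≤ 3 * F'.card := by omega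
        have hseven' : Even (∑ y ∈ F', f y) := by
          obtain ⟨a, ha⟩ := hseven; obtain ⟨b, hb⟩ := hxeven
          exact ⟨a - b, by omega⟩
        have hle : f x ≤ (∑ y ∈ F', f y) + 2 := by omega
        -- case split on t
        obtain ⟨a, ha⟩ := hseven'
        obtain ⟨b, hb⟩ := hxeven
        obtain ⟨u, hu⟩ := hteven
        have hcases : t + 2 ≤ ∑ y ∈ F', f y ∨ t = ∑ y ∈ F', f y ∨ t = f x ∨
            (f x + 2 ≤ t) := by omega
        rcases hcases with h | h | h | h
        · obtain ⟨S, hS, hsum'⟩ := ih F' f hcard' h2' htwos' hs3' ⟨a, ha⟩ t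
            ⟨u, hu⟩ ht2 h
          exact ⟨S, hS.trans (Finset.erase_subset _ _), hsum'⟩
        · exact ⟨F', Finset.erase_subset _ _, h.symm⟩
        · exact ⟨{x}, Finset.singleton_subset_iff.mpr hxF, by simp [h]⟩
        · obtain ⟨S, hS, hsum'⟩ := ih F' f hcard' h2' htwos' hs3' ⟨a, ha⟩ (t - f x)
            ⟨u - b, by omega⟩ (by omega) (by omega)
          have hxS : x ∉ S := fun hxS => Finset.notMem_erase x F (hS hxS)
          refine ⟨insert x S, ?_, ?_⟩
          · exact Finset.insert_subset hxF (hS.trans (Finset.erase_subset _ _))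
          · rw [Finset.sum_insert hxS, hsum']; omega
      · -- no even element ≥ 4 : there are at least two odd elements
        obtain ⟨x₀, hx₀F, hx₀⟩ := hall
        have hx₀odd : Odd (f x₀) := by
          rcases Nat.even_or_odd (f x₀) with he | ho
          · exfalso; refine hex ⟨x₀, hx₀F, ?_, he⟩
            have := h2 x₀ hx₀F; obtain ⟨b, hb⟩ := he; omega
          · exact ho
        have hOcard : Even ((F.filter (fun y => Odd (f y))).card) :=
          (Finset.even_sum_iff_even_card_odd f).mp hseven
        have hx₀O : x₀ ∈ F.filter (fun y => Odd (f y)) :=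
          mem_filter.mpr ⟨hx₀F, hx₀odd⟩
        have hO2 : 2 ≤ (F.filter (fun y => Odd (f y))).card := by
          have h1 : 1 ≤ (F.filter (fun y => Odd (f y))).card :=
            Finset.card_pos.mpr ⟨x₀, hx₀O⟩
          obtain ⟨w, hw⟩ := hOcard; omega
        obtain ⟨y₀, hy₀O, hyx⟩ := Finset.exists_mem_ne (s := F.filter (fun y => Odd (f y))) (by omega) x₀
        have hy₀F : y₀ ∈ F := (mem_filter.mp hy₀O).1
        have hy₀odd : Odd (f y₀) := (mem_filter.mp hy₀O).2
        -- remove x₀ and y₀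
        set F'' := (F.erase x₀).erase y₀ with hF''
        have hy₀e : y₀ ∈ F.erase x₀ := Finset.mem_erase.mpr ⟨hyx, hy₀F⟩
        have hsum1 : (∑ y ∈ F.erase x₀, f y) + f x₀ = ∑ y ∈ F, f y :=
          Finset.sum_erase_add F f hx₀F
        have hsum2 : (∑ y ∈ F'', f y) + f y₀ = ∑ y ∈ F.erase x₀, f y :=
          Finset.sum_erase_add _ f hy₀e
        have hcard1 : (F.erase x₀).card + 1 = F.card := Finset.card_erase_add_one hx₀F
        have hcard2 : F''.card + 1 = (F.erase x₀).card := Finset.card_erase_add_one hy₀e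
        have h2'' : ∀ y ∈ F'', 2 ≤ f y := fun y hy =>
          h2 y (Finset.mem_of_mem_erase (Finset.mem_of_mem_erase hy))
        have hlow : 2 * F''.card ≤ ∑ y ∈ F'', f y := by
          calc 2 * F''.card = F''.card * 2 := mul_comm _ _
          _ ≤ ∑ y ∈ F'', f y := Finset.card_nsmul_le_sum F'' f 2 h2''
        have htwos'' : 2 ≤ (F''.filter (fun y => f y = 2)).card := by
          refine le_trans htwos (card_le_card ?_)
          intro z hz
          rw [mem_filter] at hz ⊢
          have hzx : z ≠ x₀ := by
            intro h; subst h; obtain ⟨w, hw⟩ := hx₀odd; omega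
          have hzy : z ≠ y₀ := by
            intro h; subst h; obtain ⟨w, hw⟩ := hy₀odd; omega
          exact ⟨Finset.mem_erase.mpr ⟨hzy, Finset.mem_erase.mpr ⟨hzx, hz.1⟩⟩, hz.2⟩
        have hcard'' : F''.card ≤ c := by omega
        have hc4 : 4 ≤ F.card := by
          have := card_le_card (filter_subset (fun y => f y = 2) F'')
          omega
        have hx₀3 : 3 ≤ f x₀ := by
          have := h2 x₀ hx₀F; obtain ⟨w, hw⟩ := hx₀odd; omega
        have hy₀3 : 3 ≤ f y₀ := by
          have := h2 y₀ hy₀F; obtain ⟨w, hw⟩ := hy₀odd; omega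
        have hs3'' : (∑ y ∈ F'', f y) + 1 ≤ 3 * F''.card := by omega
        obtain ⟨ox, hox⟩ := hx₀odd
        obtain ⟨oy, hoy⟩ := hy₀odd
        obtain ⟨a, ha⟩ := hseven
        have hseven'' : Even (∑ y ∈ F'', f y) := ⟨a - ox - oy - 1, by omega⟩
        obtain ⟨a'', ha''⟩ := hseven''
        obtain ⟨u, hu⟩ := hteven
        -- p := f x₀ + f y₀ satisfies p ≤ s'' + 2
        have hple : f x₀ + f y₀ ≤ (∑ y ∈ F'', f y) + 2 := by omega
        have hcases : t + 2 ≤ ∑ y ∈ F'', f y ∨ t = ∑ y ∈ F'', f y ∨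
            t = f x₀ + f y₀ ∨ (f x₀ + f y₀ + 2 ≤ t) := by omega
        have hsubF'' : F'' ⊆ F := fun z hz =>
          Finset.mem_of_mem_erase (Finset.mem_of_mem_erase hz)
        rcases hcases with h | h | h | h
        · obtain ⟨S, hS, hsum'⟩ := ih F'' f hcard'' h2'' htwos'' hs3'' ⟨a'', ha''⟩ t
            ⟨u, hu⟩ ht2 h
          exact ⟨S, hS.trans hsubF'', hsum'⟩
        · exact ⟨F'', hsubF'', h.symm⟩
        · refine ⟨{x₀, y₀}, ?_, ?_⟩
          · intro z hz
            simp only [Finset.mem_insert, Finset.mem_singleton] at hz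
            rcases hz with rfl | rfl
            exacts [hx₀F, hy₀F]
          · rw [Finset.sum_pair hyx.symm]; omega
        · obtain ⟨S, hS, hsum'⟩ := ih F'' f hcard'' h2'' htwos'' hs3''
            ⟨a'', ha''⟩ (t - f x₀ - f y₀) ⟨u - ox - oy - 1, by omega⟩ (by omega) (by omega)
          have hxS : x₀ ∉ S := fun hmem => by
            have := hS hmem
            exact Finset.notMem_erase x₀ F (Finset.mem_of_mem_erase this)
          have hyS : y₀ ∉ S := fun hmem => Finset.notMem_erase y₀ _ (hS hmem)
          have hxyS : x₀ ∉ insert y₀ S := by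
            simp only [Finset.mem_insert]
            push_neg
            exact ⟨hyx.symm, hxS⟩
          refine ⟨insert x₀ (insert y₀ S), ?_, ?_⟩
          · refine Finset.insert_subset hx₀F (Finset.insert_subset hy₀F (hS.trans hsubF''))
          · rw [Finset.sum_insert hxyS, Finset.sum_insert hyS, hsum']; omega

lemma window_subset_sum (F : Finset ι) (f : ι → ℕ)
    (h2 : ∀ x ∈ F, 2 ≤ f x)
    (htwos : 2 ≤ (F.filter (fun x => f x = 2)).card)
    (hs3 : (∑ x ∈ F, f x) + 1 ≤ 3 * F.card)
    (A B : ℕ) (hA : Even A) (hB : Even B) (hA2 : 2 ≤ A) (hB2 : 2 ≤ B)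
    (hAB : ∑ x ∈ F, f x ≤ A + B) :
    ∃ S ⊆ F, S.Nonempty ∧ (F \ S).Nonempty ∧
      (∑ x ∈ S, f x) ≤ A ∧ (∑ x ∈ F \ S, f x) ≤ B := by
  -- a helper to finish given a subset with controlled sum
  have finish : ∀ S ⊆ F, 1 ≤ ∑ x ∈ S, f x → ∑ x ∈ S, f x ≤ A →
      (∑ x ∈ F, f x) ≤ (∑ x ∈ S, f x) + B → (∑ x ∈ S, f x) + 1 ≤ ∑ x ∈ F, f x →
      ∃ S ⊆ F, S.Nonempty ∧ (F \ S).Nonempty ∧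
        (∑ x ∈ S, f x) ≤ A ∧ (∑ x ∈ F \ S, f x) ≤ B := by
    intro S hS h1 hSA hSB hSs
    have hsd : (∑ x ∈ F \ S, f x) + ∑ x ∈ S, f x = ∑ x ∈ F, f x :=
      Finset.sum_sdiff hS
    have hne : S.Nonempty := by
      rcases S.eq_empty_or_nonempty with rfl | h
      · simp at h1
      · exact h
    have hne' : (F \ S).Nonempty := by
      rcases (F \ S).eq_empty_or_nonempty with he | h
      · rw [he] at hsd; simp at hsd; omega
      · exact h
    exact ⟨S, hS, hne, hne', hSA, by omega⟩
  set s := ∑ x ∈ F, f x with hs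
  have hcF : 2 ≤ F.card := le_trans htwos (card_le_card (filter_subset _ F))
  have hslow : 2 * F.card ≤ s := by
    calc 2 * F.card = F.card * 2 := mul_comm _ _
    _ ≤ s := Finset.card_nsmul_le_sum F f 2 h2
  by_cases hsA : s ≤ A + 2
  · -- remove a single 2-element
    have : (F.filter (fun x => f x = 2)).Nonempty := Finset.card_pos.mp (by omega)
    obtain ⟨z, hz⟩ := this
    have hzF : z ∈ F := (mem_filter.mp hz).1
    have hz2 : f z = 2 := (mem_filter.mp hz).2
    have hsum : (∑ y ∈ F.erase z, f y) + f z = s := Finset.sum_erase_add F f hzF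
    refine finish (F.erase z) (Finset.erase_subset _ _) ?_ ?_ ?_ ?_ <;> omega
  · -- now A + 3 ≤ s
    push_neg at hsA
    obtain ⟨a2, ha2⟩ := id hA
    obtain ⟨b2, hb2⟩ := id hB
    rcases Nat.even_or_odd s with hseven | hsodd
    · obtain ⟨S, hS, hsum⟩ := exact_even_subset_sum F.card F f le_rfl h2 htwos hs3
        hseven A hA hA2 (by omega)
      refine finish S hS ?_ ?_ ?_ ?_ <;> omega
    · -- s odd : pick an element of odd weight
      have hodd : Odd ((F.filter (fun y => Odd (f y))).card) :=
        (Finset.odd_sum_iff_odd_card_odd f).mp hsodd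
      have : (F.filter (fun y => Odd (f y))).Nonempty := by
        apply Finset.card_pos.mp
        obtain ⟨w, hw⟩ := hodd; omega
      obtain ⟨x, hx⟩ := this
      have hxF : x ∈ F := (mem_filter.mp hx).1
      have hxodd : Odd (f x) := (mem_filter.mp hx).2
      obtain ⟨ox, hox⟩ := hxodd
      have hx3 : 3 ≤ f x := by have := h2 x hxF; omega
      set F' := F.erase x with hF'
      have hsum : (∑ y ∈ F', f y) + f x = s := Finset.sum_erase_add F f hxF
      have hcard : F'.card + 1 = F.card := Finset.card_erase_add_one hxF
      have h2' : ∀ y ∈ F', 2 ≤ f y := fun y hy => h2 y (Finset.mem_of_mem_erase hy)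
      have hlow' : 2 * F'.card ≤ ∑ y ∈ F', f y := by
        calc 2 * F'.card = F'.card * 2 := mul_comm _ _
        _ ≤ ∑ y ∈ F', f y := Finset.card_nsmul_le_sum F' f 2 h2'
      have htwos' : 2 ≤ (F'.filter (fun y => f y = 2)).card := by
        refine le_trans htwos (card_le_card ?_)
        intro y hy
        rw [mem_filter] at hy ⊢
        refine ⟨Finset.mem_erase.mpr ⟨fun h => by rw [h] at hy; omega, hy.1⟩, hy.2⟩
      have hcF' : 2 ≤ F'.card := le_trans htwos' (card_le_card (filter_subset _ F'))
      have hs3' : (∑ y ∈ F', f y) + 1 ≤ 3 * F'.card := by omega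
      have hseven' : Even (∑ y ∈ F', f y) := by
        obtain ⟨w, hw⟩ := hsodd; exact ⟨w - ox, by omega⟩
      obtain ⟨a', ha'⟩ := hseven'
      -- f x ≤ s' since |F| ≥ 3
      have hle : f x ≤ ∑ y ∈ F', f y := by omega
      set t := min A (s - 1) with htdef
      have htA : t ≤ A := min_le_left _ _
      have hts1 : t ≤ s - 1 := min_le_right _ _
      have htor : t = A ∨ t = s - 1 := min_choice _ _
      have hteven : ∃ u, t = u + u := by rcases htor with h | h
        <;> [exact ⟨a2, by omega⟩; exact ⟨(s-1)/2, by omega⟩]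
      obtain ⟨u, hu⟩ := hteven
      have ht2 : 2 ≤ t := by omega
      have hcases : t + 2 ≤ ∑ y ∈ F', f y ∨ t = ∑ y ∈ F', f y ∨
          t = f x + 1 ∨ (f x + 3 ≤ t) := by omega
      have hsub' : F' ⊆ F := Finset.erase_subset _ _
      have hABs : s + 1 ≤ A + B := by omega
      rcases hcases with h | h | h | h
      · obtain ⟨S, hS, hsum'⟩ := exact_even_subset_sum F'.card F' f le_rfl h2' htwos'
          hs3' ⟨a', ha'⟩ t ⟨u, hu⟩ ht2 h
        refine finish S (hS.trans hsub') ?_ ?_ ?_ ?_ <;> omega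
      · refine finish F' hsub' ?_ ?_ ?_ ?_ <;> omega
      · refine finish {x} (Finset.singleton_subset_iff.mpr hxF) ?_ ?_ ?_ ?_ <;>
          rw [Finset.sum_singleton] <;> omega
      · obtain ⟨S, hS, hsum'⟩ := exact_even_subset_sum F'.card F' f le_rfl h2' htwos'
          hs3' ⟨a', ha'⟩ (t - 1 - f x) ⟨u - ox - 1, by omega⟩ (by omega) (by omega)
        have hxS : x ∉ S := fun hmem => Finset.notMem_erase x F (hS hmem)
        have hsumS : ∑ y ∈ insert x S, f y = t - 1 := by
          rw [Finset.sum_insert hxS, hsum']; omega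
        refine finish (insert x S) (Finset.insert_subset hxF (hS.trans hsub'))
          ?_ ?_ ?_ ?_ <;> rw [hsumS] <;> omega

end CombLemmas

open Finset in

theorem secondary_decomposability (n : ℕ) (hne : Even n)
    (σ : Equiv.Perm (Fin n)) (hns : n + 1 < 3 * σ.cycleFactorsFinset.card) :
    ∀ m : ℕ, Even m → 2 ≤ m → m ≤ n - 2 →
      ∃ ρ φ : Equiv.Perm (Fin n), ρ ≠ 1 ∧ φ ≠ 1 ∧ ρ.Disjoint φ ∧
        σ = ρ * φ ∧ ρ.support.card ≤ m ∧ φ.support.card ≤ n - m := by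
  intro m hm hm2 hmn
  set F := σ.cycleFactorsFinset with hF
  set f : Perm (Fin n) → ℕ := fun τ => τ.support.card with hf
  have h2 : ∀ τ ∈ F, 2 ≤ f τ := fun τ hτ =>
    (Equiv.Perm.mem_cycleFactorsFinset_iff.mp hτ).1.two_le_card_support
  -- the total weight is the support of σ
  have hsum : ∑ τ ∈ F, f τ = σ.support.card := by
    rw [← Equiv.Perm.sum_cycleType, Equiv.Perm.cycleType_def, Finset.sum]
    rfl
  have hsn : ∑ τ ∈ F, f τ ≤ n := by
    rw [hsum]
    calc σ.support.card ≤ Finset.univ.card := Finset.card_le_univ _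
    _ = n := by simp
  have hs3 : (∑ τ ∈ F, f τ) + 1 ≤ 3 * F.card := by omega
  -- at least two transpositions among the cycle factors
  have htwos : 2 ≤ (F.filter (fun x => f x = 2)).card := by
    have hsplit : (∑ x ∈ F.filter (fun x => f x = 2), f x) +
        ∑ x ∈ F.filter (fun x => ¬ f x = 2), f x = ∑ x ∈ F, f x :=
      Finset.sum_filter_add_sum_filter_not F _ f
    have h1 : ∑ x ∈ F.filter (fun x => f x = 2), f x =
        2 * (F.filter (fun x => f x = 2)).card := by
      rw [Finset.sum_congr rfl (fun x hx => (mem_filter.mp hx).2)]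
      simp [mul_comm]
    have h3 : 3 * (F.filter (fun x => ¬ f x = 2)).card ≤
        ∑ x ∈ F.filter (fun x => ¬ f x = 2), f x := by
      rw [mul_comm]
      refine Finset.card_nsmul_le_sum _ f 3 ?_
      intro x hx
      have := h2 x (mem_filter.mp hx).1
      have := (mem_filter.mp hx).2
      omega
    have hcards : (F.filter (fun x => f x = 2)).card +
        (F.filter (fun x => ¬ f x = 2)).card = F.card :=
      Finset.card_filter_add_card_filter_not _
    omega
  -- bin capacities
  have hn4 : m + 2 ≤ n := by omega
  have hBeven : Even (n - m) := by
    rw [Nat.even_sub (by omega)]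
    exact ⟨fun _ => hm, fun _ => hne⟩
  obtain ⟨S, hS, hSne, hTne, hSA, hTB⟩ := window_subset_sum F f h2 htwos hs3
    m (n - m) hm hBeven hm2 (by omega) (by omega)
  set T := F \ S with hT
  -- pairwise disjointness
  have hpwF : (↑F : Set (Perm (Fin n))).Pairwise Equiv.Perm.Disjoint :=
    σ.cycleFactorsFinset_pairwise_disjoint
  have hTF : T ⊆ F := Finset.sdiff_subset
  have hpwS : (↑S : Set (Perm (Fin n))).Pairwise fun a b =>
      Equiv.Perm.Disjoint (id a) (id b) := hpwF.mono (Finset.coe_subset.mpr hS)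
  have hpwT : (↑T : Set (Perm (Fin n))).Pairwise fun a b =>
      Equiv.Perm.Disjoint (id a) (id b) := hpwF.mono (Finset.coe_subset.mpr hTF)
  set ρ := S.noncommProd id (hpwS.imp fun _ _ => Equiv.Perm.Disjoint.commute) with hρ
  set φ := T.noncommProd id (hpwT.imp fun _ _ => Equiv.Perm.Disjoint.commute) with hφ
  have hsuppρ : ρ.support = S.biUnion fun i => (id i : Perm (Fin n)).support :=
    Equiv.Perm.support_noncommProd hpwS
  have hsuppφ : φ.support = T.biUnion fun i => (id i : Perm (Fin n)).support :=
    Equiv.Perm.support_noncommProd hpwT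
  have hcardρ : ρ.support.card = ∑ τ ∈ S, f τ := by
    rw [hsuppρ]
    exact Finset.card_biUnion fun x hx y hy hxy =>
      Equiv.Perm.Disjoint.disjoint_support (hpwS (Finset.mem_coe.mpr hx)
        (Finset.mem_coe.mpr hy) hxy)
  have hcardφ : φ.support.card = ∑ τ ∈ T, f τ := by
    rw [hsuppφ]
    exact Finset.card_biUnion fun x hx y hy hxy =>
      Equiv.Perm.Disjoint.disjoint_support (hpwT (Finset.mem_coe.mpr hx)
        (Finset.mem_coe.mpr hy) hxy)
  -- nontriviality
  obtain ⟨τS, hτS⟩ := hSne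
  obtain ⟨τT, hτT⟩ := hTne
  have hSsum2 : 2 ≤ ∑ τ ∈ S, f τ :=
    le_trans (h2 τS (hS hτS)) (Finset.single_le_sum (fun i _ => Nat.zero_le (f i)) hτS)
  have hTsum2 : 2 ≤ ∑ τ ∈ T, f τ :=
    le_trans (h2 τT (hTF hτT)) (Finset.single_le_sum (fun i _ => Nat.zero_le (f i)) hτT)
  have hρ1 : ρ ≠ 1 := by
    intro h
    rw [h, Equiv.Perm.support_one] at hcardρ
    simp at hcardρ
    omega
  have hφ1 : φ ≠ 1 := by
    intro h
    rw [h, Equiv.Perm.support_one] at hcardφ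
    simp at hcardφ
    omega
  -- disjointness of ρ and φ
  have hdisj : ρ.Disjoint φ := by
    rw [Equiv.Perm.disjoint_iff_disjoint_support, hsuppρ, hsuppφ]
    rw [Finset.disjoint_biUnion_left]
    intro τ hτ
    rw [Finset.disjoint_biUnion_right]
    intro τ' hτ'
    have hne2 : τ ≠ τ' := by
      intro h; subst h
      exact (Finset.mem_sdiff.mp hτ').2 hτ
    exact Equiv.Perm.Disjoint.disjoint_support
      (hpwF (Finset.mem_coe.mpr (hS hτ)) (Finset.mem_coe.mpr (hTF hτ')) hne2)
  -- the product
  have hunion : S ∪ T = F := Finset.union_sdiff_of_subset hS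
  have hd : Disjoint S T := Finset.disjoint_sdiff
  have hprod : σ = ρ * φ := by
    have hcomm : { x | x ∈ S ∪ T }.Pairwise (Function.onFun Commute (id : Perm (Fin n) → _)) := by
      rw [hunion]
      exact σ.cycleFactorsFinset_mem_commute
    calc σ = F.noncommProd id σ.cycleFactorsFinset_mem_commute :=
          (Equiv.Perm.cycleFactorsFinset_noncommProd σ).symm
    _ = (S ∪ T).noncommProd id hcomm := by congr 1; rw [hunion]
    _ = ρ * φ := Finset.noncommProd_union_of_disjoint hd id hcomm
  exact ⟨ρ, φ, hρ1, hφ1, hdisj, hprod, by omega, by omega⟩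
end

section
/- Let k ≥ 4 be even and set n = 4k. Suppose σ ∈ A_n satisfies n_σ ≥ k + 2. Then there exist ε ∈ {0,1} and even permutations φ, τ ∈ S_n with disjoint supports such that σ = φτ, |supp(φ)| ≤ 4(k−2) − ε, and |supp(τ)| ≤ 8 + ε. -/
open Equiv

open Finset in
private lemma helper_split {k : ℕ} (hk : 4 ≤ k)
    (σ : Equiv.Perm (Fin (4 * k))) (hσ : σ ∈ alternatingGroup (Fin (4 * k)))
    (T : Finset (Equiv.Perm (Fin (4 * k)))) (hT : T ⊆ σ.cycleFactorsFinset)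
    (ε : ℕ) (hε : ε ≤ 1)
    (hsum : ∑ c ∈ T, c.support.card = 8 + ε)
    (hsign : ∏ c ∈ T, Equiv.Perm.sign c = 1) :
    ∃ (ε : ℕ) (φ τ : Equiv.Perm (Fin (4 * k))), ε ≤ 1 ∧
      φ ∈ alternatingGroup (Fin (4 * k)) ∧ τ ∈ alternatingGroup (Fin (4 * k)) ∧
      φ.Disjoint τ ∧ σ = φ * τ ∧
      φ.support.card ≤ 4 * (k - 2) - ε ∧ τ.support.card ≤ 8 + ε := by
  classical
  set F := σ.cycleFactorsFinset with hF
  have hpd : (F : Set (Perm (Fin (4 * k)))).Pairwise Equiv.Perm.Disjoint :=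
    σ.cycleFactorsFinset_pairwise_disjoint
  have hTd : Set.Pairwise (T : Set (Perm (Fin (4 * k))))
      fun i j => (id i : Perm (Fin (4 * k))).Disjoint (id j) :=
    hpd.mono (Finset.coe_subset.mpr hT)
  have hFcd : Set.Pairwise ((F \ T : Finset (Perm (Fin (4 * k)))) : Set (Perm (Fin (4 * k))))
      fun i j => (id i : Perm (Fin (4 * k))).Disjoint (id j) :=
    hpd.mono (Finset.coe_subset.mpr Finset.sdiff_subset)
  set τ := T.noncommProd id (hTd.imp fun _ _ => Equiv.Perm.Disjoint.commute) with hτ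
  set φ := (F \ T).noncommProd id (hFcd.imp fun _ _ => Equiv.Perm.Disjoint.commute) with hφ
  have hsupτ : τ.support = T.biUnion fun c => c.support :=
    Equiv.Perm.support_noncommProd hTd
  have hsupφ : φ.support = (F \ T).biUnion fun c => c.support :=
    Equiv.Perm.support_noncommProd hFcd
  have hcards : ∀ S : Finset (Perm (Fin (4 * k))), S ⊆ F →
      (S.biUnion fun c => c.support).card = ∑ c ∈ S, c.support.card := by
    intro S hS
    apply Finset.card_biUnion
    intro x hx y hy hxy
    exact Equiv.Perm.disjoint_iff_disjoint_support.mp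
      (hpd (hS hx) (hS hy) hxy)
  -- product decomposition
  have hcommU : ((F \ T ∪ T : Finset (Perm (Fin (4 * k)))) : Set (Perm (Fin (4 * k)))).Pairwise
      (Function.onFun Commute id) := by
    rw [Finset.sdiff_union_of_subset hT]
    exact σ.cycleFactorsFinset_mem_commute
  have hστ : σ = φ * τ := by
    have h2 : (F \ T ∪ T).noncommProd id hcommU = σ := by
      refine (Finset.noncommProd_congr (Finset.sdiff_union_of_subset hT)
        (fun _ _ => rfl) _).trans ?_
      exact σ.cycleFactorsFinset_noncommProd
    have h1 := Finset.noncommProd_union_of_disjoint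
      (Finset.sdiff_disjoint (s := T) (t := F)) id hcommU
    exact h2.symm.trans h1
  -- disjointness
  have hdisj : φ.Disjoint τ := by
    apply Equiv.Perm.disjoint_noncommProd_right
    intro c hc
    have h1 : (id c : Perm (Fin (4 * k))).Disjoint φ := by
      apply Equiv.Perm.disjoint_noncommProd_right
      intro d hd
      have hdF := Finset.mem_sdiff.mp hd
      have hne : c ≠ d := fun h => hdF.2 (h ▸ hc)
      exact hpd (Finset.mem_coe.mpr (hT hc)) (Finset.mem_coe.mpr hdF.1) hne
    exact h1.symm
  -- signs
  have hsignτ : Equiv.Perm.sign τ = 1 := by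
    rw [hτ, Finset.map_noncommProd T id _ Equiv.Perm.sign,
      Finset.noncommProd_eq_prod]
    exact hsign
  have hsignφ : Equiv.Perm.sign φ = 1 := by
    have h := congrArg Equiv.Perm.sign hστ
    rw [map_mul, hsignτ, mul_one] at h
    rw [← h]
    exact Equiv.Perm.mem_alternatingGroup.mp hσ
  -- support cards
  have hτcard : τ.support.card = 8 + ε := by
    rw [hsupτ, hcards T hT, hsum]
  have hFsum : ∑ c ∈ F, c.support.card ≤ 4 * k := by
    rw [← hcards F (Finset.Subset.refl F)]
    calc (F.biUnion fun c => c.support).card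
        ≤ (Finset.univ : Finset (Fin (4 * k))).card := Finset.card_le_univ _
      _ = 4 * k := by simp
  have hφcard : φ.support.card = (∑ c ∈ F, c.support.card) - (8 + ε) := by
    rw [hsupφ, hcards (F \ T) Finset.sdiff_subset]
    have hsd : ∑ c ∈ F \ T, c.support.card + ∑ c ∈ T, c.support.card
        = ∑ c ∈ F, c.support.card := Finset.sum_sdiff hT
    omega
  refine ⟨ε, φ, τ, hε, Equiv.Perm.mem_alternatingGroup.mpr hsignφ,
    Equiv.Perm.mem_alternatingGroup.mpr hsignτ, hdisj, hστ, ?_, ?_⟩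
  · omega
  · omega

theorem n_k_6_lemma2 (k : ℕ) (hk : 4 ≤ k) (hke : Even k)
    (σ : Equiv.Perm (Fin (4 * k))) (hσ : σ ∈ alternatingGroup (Fin (4 * k)))
    (hns : k + 2 ≤ σ.cycleFactorsFinset.card) :
    ∃ (ε : ℕ) (φ τ : Equiv.Perm (Fin (4 * k))), ε ≤ 1 ∧
      φ ∈ alternatingGroup (Fin (4 * k)) ∧ τ ∈ alternatingGroup (Fin (4 * k)) ∧
      φ.Disjoint τ ∧ σ = φ * τ ∧
      φ.support.card ≤ 4 * (k - 2) - ε ∧ τ.support.card ≤ 8 + ε := by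
  classical
  set F := σ.cycleFactorsFinset with hF
  have hpd : (F : Set (Perm (Fin (4 * k)))).Pairwise Equiv.Perm.Disjoint :=
    σ.cycleFactorsFinset_pairwise_disjoint
  have hcyc : ∀ c ∈ F, c.IsCycle := fun c hc =>
    (Equiv.Perm.mem_cycleFactorsFinset_iff.mp hc).1
  have h2le : ∀ c ∈ F, 2 ≤ c.support.card := fun c hc =>
    (hcyc c hc).two_le_card_support
  have hsigncard : ∀ c ∈ F, Equiv.Perm.sign c = -(-1) ^ c.support.card :=
    fun c hc => (hcyc c hc).sign
  set A2 := F.filter (fun c => c.support.card = 2) with hA2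
  set A3 := F.filter (fun c => c.support.card = 3) with hA3
  set A4 := F.filter (fun c => c.support.card = 4) with hA4
  set R := F.filter (fun c => 5 ≤ c.support.card) with hR
  -- total support bound
  have hFsum : ∑ c ∈ F, c.support.card ≤ 4 * k := by
    have hcard : (F.biUnion fun c => c.support).card = ∑ c ∈ F, c.support.card := by
      apply Finset.card_biUnion
      intro x hx y hy hxy
      exact Equiv.Perm.disjoint_iff_disjoint_support.mp (hpd hx hy hxy)
    rw [← hcard]
    calc (F.biUnion fun c => c.support).card
        ≤ (Finset.univ : Finset (Fin (4 * k))).card := Finset.card_le_univ _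
      _ = 4 * k := by simp
  -- partition facts
  have hd23 : Disjoint A2 A3 := by
    rw [Finset.disjoint_left]; intro c h1 h2
    rw [hA2, Finset.mem_filter] at h1; rw [hA3, Finset.mem_filter] at h2; omega
  have hd234 : Disjoint (A2 ∪ A3) A4 := by
    rw [Finset.disjoint_left]; intro c h1 h2
    rw [Finset.mem_union, hA2, hA3, Finset.mem_filter, Finset.mem_filter] at h1
    rw [hA4, Finset.mem_filter] at h2; omega
  have hd234R : Disjoint (A2 ∪ A3 ∪ A4) R := by
    rw [Finset.disjoint_left]; intro c h1 h2
    rw [Finset.mem_union, Finset.mem_union, hA2, hA3, hA4,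
      Finset.mem_filter, Finset.mem_filter, Finset.mem_filter] at h1
    rw [hR, Finset.mem_filter] at h2; omega
  have hunion : A2 ∪ A3 ∪ A4 ∪ R = F := by
    ext c
    simp only [hA2, hA3, hA4, hR, Finset.mem_union, Finset.mem_filter]
    constructor
    · rintro (((⟨h, _⟩ | ⟨h, _⟩) | ⟨h, _⟩) | ⟨h, _⟩) <;> exact h
    · intro h
      have h2 := h2le c h
      have : c.support.card = 2 ∨ c.support.card = 3 ∨ c.support.card = 4 ∨
          5 ≤ c.support.card := by omega
      tauto
  have hcardF : A2.card + A3.card + A4.card + R.card = F.card := by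
    rw [← hunion, Finset.card_union_of_disjoint hd234R,
      Finset.card_union_of_disjoint hd234, Finset.card_union_of_disjoint hd23]
  have hsumF : ∑ c ∈ A2, c.support.card + ∑ c ∈ A3, c.support.card
      + ∑ c ∈ A4, c.support.card + ∑ c ∈ R, c.support.card
      = ∑ c ∈ F, c.support.card := by
    rw [← hunion, Finset.sum_union hd234R, Finset.sum_union hd234,
      Finset.sum_union hd23]
  have hs2 : ∑ c ∈ A2, c.support.card = 2 * A2.card := by
    rw [Finset.sum_congr rfl (fun c hc => (Finset.mem_filter.mp hc).2),
      Finset.sum_const, smul_eq_mul, mul_comm]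
  have hs3 : ∑ c ∈ A3, c.support.card = 3 * A3.card := by
    rw [Finset.sum_congr rfl (fun c hc => (Finset.mem_filter.mp hc).2),
      Finset.sum_const, smul_eq_mul, mul_comm]
  have hs4 : ∑ c ∈ A4, c.support.card = 4 * A4.card := by
    rw [Finset.sum_congr rfl (fun c hc => (Finset.mem_filter.mp hc).2),
      Finset.sum_const, smul_eq_mul, mul_comm]
  have hsR : 5 * R.card ≤ ∑ c ∈ R, c.support.card := by
    calc 5 * R.card = ∑ _c ∈ R, 5 := by simp [mul_comm]
      _ ≤ ∑ c ∈ R, c.support.card :=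
        Finset.sum_le_sum fun c hc => (Finset.mem_filter.mp hc).2
  -- key combinatorial disjunction
  have hkey : 4 ≤ A2.card ∨ 3 ≤ A3.card ∨ 2 ≤ A4.card ∨
      (0 < A2.card ∧ 0 < A3.card ∧ 0 < A4.card) := by
    by_contra h
    push_neg at h
    omega
  rcases hkey with h | h | h | ⟨h1, h2, h3⟩
  · -- four 2-cycles
    obtain ⟨T, hTsub, hTcard⟩ := Finset.exists_subset_card_eq h
    have hTF : T ⊆ F := hTsub.trans (Finset.filter_subset _ _)
    have hval : ∀ c ∈ T, c.support.card = 2 :=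
      fun c hc => (Finset.mem_filter.mp (hTsub hc)).2
    apply helper_split hk σ hσ T hTF 0 (by norm_num)
    · rw [Finset.sum_congr rfl hval, Finset.sum_const, hTcard]
      norm_num
    · rw [Finset.prod_congr rfl (fun c hc =>
        show Equiv.Perm.sign c = -1 by
          rw [hsigncard c (hTF hc), hval c hc]; decide),
        Finset.prod_const, hTcard]
      decide
  · -- three 3-cycles
    obtain ⟨T, hTsub, hTcard⟩ := Finset.exists_subset_card_eq h
    have hTF : T ⊆ F := hTsub.trans (Finset.filter_subset _ _)
    have hval : ∀ c ∈ T, c.support.card = 3 :=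
      fun c hc => (Finset.mem_filter.mp (hTsub hc)).2
    apply helper_split hk σ hσ T hTF 1 (by norm_num)
    · rw [Finset.sum_congr rfl hval, Finset.sum_const, hTcard]
      norm_num
    · rw [Finset.prod_congr rfl (fun c hc =>
        show Equiv.Perm.sign c = 1 by
          rw [hsigncard c (hTF hc), hval c hc]; decide),
        Finset.prod_const, hTcard]
      decide
  · -- two 4-cycles
    obtain ⟨T, hTsub, hTcard⟩ := Finset.exists_subset_card_eq h
    have hTF : T ⊆ F := hTsub.trans (Finset.filter_subset _ _)
    have hval : ∀ c ∈ T, c.support.card = 4 :=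
      fun c hc => (Finset.mem_filter.mp (hTsub hc)).2
    apply helper_split hk σ hσ T hTF 0 (by norm_num)
    · rw [Finset.sum_congr rfl hval, Finset.sum_const, hTcard]
      norm_num
    · rw [Finset.prod_congr rfl (fun c hc =>
        show Equiv.Perm.sign c = -1 by
          rw [hsigncard c (hTF hc), hval c hc]; decide),
        Finset.prod_const, hTcard]
      decide
  · -- one cycle each of lengths 2, 3, 4
    obtain ⟨c2, hc2⟩ := Finset.card_pos.mp h1
    obtain ⟨c3, hc3⟩ := Finset.card_pos.mp h2
    obtain ⟨c4, hc4⟩ := Finset.card_pos.mp h3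
    rw [hA2, Finset.mem_filter] at hc2
    rw [hA3, Finset.mem_filter] at hc3
    rw [hA4, Finset.mem_filter] at hc4
    have hne23 : c2 ≠ c3 := fun h => by rw [h] at hc2; omega
    have hne24 : c2 ≠ c4 := fun h => by rw [h] at hc2; omega
    have hne34 : c3 ≠ c4 := fun h => by rw [h] at hc3; omega
    have hnm2 : c2 ∉ ({c3, c4} : Finset (Perm (Fin (4 * k)))) := by
      simp [hne23, hne24]
    have hnm3 : c3 ∉ ({c4} : Finset (Perm (Fin (4 * k)))) := by simp [hne34]
    set T : Finset (Perm (Fin (4 * k))) := {c2, c3, c4} with hT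
    have hTF : T ⊆ F := by
      intro c hc
      rw [hT] at hc
      simp only [Finset.mem_insert, Finset.mem_singleton] at hc
      rcases hc with rfl | rfl | rfl
      · exact hc2.1
      · exact hc3.1
      · exact hc4.1
    apply helper_split hk σ hσ T hTF 1 (by norm_num)
    · rw [hT, Finset.sum_insert hnm2, Finset.sum_insert hnm3,
        Finset.sum_singleton, hc2.2, hc3.2, hc4.2]
      norm_num
    · rw [hT, Finset.prod_insert hnm2, Finset.prod_insert hnm3,
        Finset.prod_singleton, hsigncard c2 hc2.1, hsigncard c3 hc3.1,
        hsigncard c4 hc4.1, hc2.2, hc3.2, hc4.2]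
      decide
end
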